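/- arXiv:math/9901035 — 8 statements merged into one kernel-verified Lean document; each statement's English description precedes it below -/
import Mathlib

section
/- If a power series ∑ c_k z^k converges for all z in the open unit disk and satisfies |∑ c_k z^k| < 1 for all |z| < 1, then ∑ |c_k| |z|^k < 1 for all |z| < 1/3. -/
open Metric Finset Filter

/-- Absolute summability of the coefficients against any radius `< 1`. -/
lemma bohr_abs_summable (c : ℕ → ℂ)
    (hconv : ∀ z : ℂ, ‖z‖ < 1 → Summable (fun k => c k * z ^ k)) :
    ∀ r : ℝ, 0 ≤ r → r < 1 → Summable (fun k => ‖c k‖ * r ^ k) := by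
  intro r hr0 hr1
  set ρ : ℝ := (r + 1) / 2 with hρ
  have hρ0 : 0 < ρ := by positivity
  have hrρ : r < ρ := by simp only [hρ]; linarith
  have hρ1 : ρ < 1 := by simp only [hρ]; linarith
  have hs : Summable (fun k => c k * (ρ : ℂ) ^ k) := by
    refine hconv _ ?_
    rw [Complex.norm_real]
    rw [Real.norm_eq_abs, abs_of_nonneg hρ0.le]
    exact hρ1
  have hten : Filter.Tendsto (fun k => ‖c k * (ρ : ℂ) ^ k‖) atTop (nhds 0) := by
    simpa using hs.tendsto_atTop_zero.norm
  obtain ⟨C, hC⟩ := hten.bddAbove_range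
  have hC' : ∀ k, ‖c k‖ * ρ ^ k ≤ C := by
    intro k
    have := hC (Set.mem_range_self k)
    rwa [norm_mul, norm_pow, Complex.norm_real, Real.norm_eq_abs, abs_of_nonneg hρ0.le] at this
  have hq0 : 0 ≤ r / ρ := by positivity
  have hq1 : r / ρ < 1 := (div_lt_one hρ0).2 hrρ
  refine Summable.of_nonneg_of_le (fun k => by positivity) (fun k => ?_)
    (((summable_geometric_of_lt_one hq0 hq1)).mul_left C)
  have heq : ‖c k‖ * r ^ k = (‖c k‖ * ρ ^ k) * (r / ρ) ^ k := by
    field_simp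
    rw [mul_assoc, ← mul_pow, mul_div_assoc', mul_div_cancel_left₀ r hρ0.ne']
  rw [heq]
  exact mul_le_mul_of_nonneg_right (hC' k) (by positivity)

/-- Möbius maps of the unit disk stay in the unit disk. -/
lemma bohr_mobius_lt_one {a v : ℂ} (ha : ‖a‖ < 1) (hv : ‖v‖ < 1) :
    ‖(v - a) / (1 - (starRingEnd ℂ) a * v)‖ < 1 := by
  have ha2 : a.re ^ 2 + a.im ^ 2 < 1 := by
    have h := Complex.sq_norm a
    rw [Complex.normSq_apply] at h
    have : ‖a‖ < 1 := by exact ha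
    nlinarith [norm_nonneg a]
  have hv2 : v.re ^ 2 + v.im ^ 2 < 1 := by
    have h := Complex.sq_norm v
    rw [Complex.normSq_apply] at h
    have : ‖v‖ < 1 := by exact hv
    nlinarith [norm_nonneg v]
  have hkey : ‖v - a‖ ^ 2 < ‖1 - (starRingEnd ℂ) a * v‖ ^ 2 := by
    rw [Complex.sq_norm, Complex.sq_norm,
      Complex.normSq_apply, Complex.normSq_apply]
    simp only [Complex.sub_re, Complex.sub_im, Complex.mul_re, Complex.mul_im,
      Complex.conj_re, Complex.conj_im, Complex.one_re, Complex.one_im]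
    nlinarith [mul_pos (by linarith : (0:ℝ) < 1 - (a.re ^ 2 + a.im ^ 2))
      (by linarith : (0:ℝ) < 1 - (v.re ^ 2 + v.im ^ 2))]
  have hlt : ‖v - a‖ < ‖1 - (starRingEnd ℂ) a * v‖ :=
    lt_of_pow_lt_pow_left₀ 2 (norm_nonneg _) hkey
  have hpos : 0 < ‖1 - (starRingEnd ℂ) a * v‖ := (norm_nonneg (v - a)).trans_lt hlt
  rw [norm_div, div_lt_one hpos]
  exact hlt

/-- Schwarz–Pick inequality at the origin. -/
lemma bohr_schwarz_pick {F : ℂ → ℂ} (hd : DifferentiableOn ℂ F (ball 0 1))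
    (hm : ∀ z ∈ ball (0:ℂ) 1, ‖F z‖ < 1) :
    ‖deriv F 0‖ ≤ 1 - ‖F 0‖ ^ 2 := by
  set a : ℂ := F 0 with haeq
  have h0mem : (0:ℂ) ∈ ball (0:ℂ) 1 := by simp
  have ha : ‖a‖ < 1 := hm 0 h0mem
  have hdenom : ∀ v : ℂ, ‖v‖ < 1 → (1 : ℂ) - (starRingEnd ℂ) a * v ≠ 0 := by
    intro v hv h
    have : (1:ℂ) = (starRingEnd ℂ) a * v := by linear_combination h
    have : (1:ℝ) = ‖(starRingEnd ℂ) a * v‖ := by rw [← this]; simp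
    rw [norm_mul, RCLike.norm_conj] at this
    nlinarith [norm_nonneg a, norm_nonneg v]
  set g : ℂ → ℂ := fun z => (F z - a) / (1 - (starRingEnd ℂ) a * F z) with hg
  have hgd : DifferentiableOn ℂ g (ball 0 1) := by
    intro z hz
    exact ((hd z hz).sub_const a).div
      ((differentiableWithinAt_const _).sub ((differentiableWithinAt_const _).mul (hd z hz)))
      (hdenom _ (hm z hz))
  have hg0 : g 0 = 0 := by simp [hg, haeq]
  have hmaps : Set.MapsTo g (ball 0 1) (ball (g 0) 1) := by
    intro z hz
    rw [hg0, mem_ball_zero_iff]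
    exact bohr_mobius_lt_one ha (hm z hz)
  have hs := Complex.norm_deriv_le_div_of_mapsTo_ball hgd (hmaps.mono_right ball_subset_closedBall) one_pos
  -- compute deriv g 0
  have hFd : DifferentiableAt ℂ F 0 := hd.differentiableAt (isOpen_ball.mem_nhds h0mem)
  have hdne : (1 : ℂ) - (starRingEnd ℂ) a * a ≠ 0 := hdenom a ha
  have hμ : HasDerivAt (fun w => (w - a) / (1 - (starRingEnd ℂ) a * w))
      (((1 : ℂ) - (starRingEnd ℂ) a * a)⁻¹) a := by
    have h1 : HasDerivAt (fun w : ℂ => w - a) 1 a := (hasDerivAt_id a).sub_const a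
    have h2 : HasDerivAt (fun w : ℂ => (1:ℂ) - (starRingEnd ℂ) a * w) (-((starRingEnd ℂ) a)) a := by
      simpa using ((hasDerivAt_id a).const_mul ((starRingEnd ℂ) a)).const_sub 1
    have := h1.div h2 hdne
    convert this using 1
    · rfl
    · rfl
    · rfl
    field_simp
    ring
  have hgder : HasDerivAt g ((((1 : ℂ) - (starRingEnd ℂ) a * a)⁻¹) * deriv F 0) 0 := by
    have := hμ.comp 0 hFd.hasDerivAt
    exact this
  have hderiv : deriv g 0 = (((1 : ℂ) - (starRingEnd ℂ) a * a)⁻¹) * deriv F 0 := hgder.deriv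
  rw [hderiv] at hs
  have hval : (1 : ℂ) - (starRingEnd ℂ) a * a = ((1 - ‖a‖ ^ 2 : ℝ) : ℂ) := by
    have h1 : ((starRingEnd ℂ) a) * a = (Complex.normSq a : ℂ) := by
      rw [mul_comm, Complex.mul_conj]
    rw [h1]
    have h2 : Complex.normSq a = ‖a‖ ^ 2 := by
      rw [Complex.normSq_eq_norm_sq]
    rw [h2]
    push_cast
    ring
  have hpos : (0:ℝ) < 1 - ‖a‖ ^ 2 := by nlinarith [norm_nonneg a]
  rw [hval, norm_mul, norm_inv, Complex.norm_real, Real.norm_eq_abs, abs_of_pos hpos] at hs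
  rw [inv_mul_le_iff₀ hpos] at hs
  simpa using hs

/-- The coefficient bound `‖c 1‖ ≤ 1 - ‖c 0‖²` for a power series bounded by 1. -/
lemma bohr_coeff_one (c : ℕ → ℂ)
    (hconv : ∀ z : ℂ, ‖z‖ < 1 → Summable (fun k => c k * z ^ k))
    (hbound : ∀ z : ℂ, ‖z‖ < 1 → ‖∑' k : ℕ, c k * z ^ k‖ < 1) :
    ‖c 1‖ ≤ 1 - ‖c 0‖ ^ 2 := by
  set p := FormalMultilinearSeries.ofScalars ℂ c with hp
  have hrad : 1 ≤ p.radius := by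
    apply ENNReal.le_of_forall_nnreal_lt
    intro r hr
    apply p.le_radius_of_summable_norm
    have hr1 : (r : ℝ) < 1 := by exact_mod_cast hr
    have := bohr_abs_summable c hconv r r.2 hr1
    simp only [hp, FormalMultilinearSeries.ofScalars_norm]
    exact this
  have hpb : HasFPowerSeriesOnBall p.sum p 0 1 :=
    (p.hasFPowerSeriesOnBall (lt_of_lt_of_le one_pos hrad)).mono one_pos hrad
  have hFeq : ∀ z : ℂ, p.sum z = ∑' k : ℕ, c k * z ^ k := by
    intro z
    show FormalMultilinearSeries.ofScalarsSum c z = _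
    rw [FormalMultilinearSeries.ofScalars_sum_eq]
    simp [smul_eq_mul]
  have hball : Metric.eball (0:ℂ) 1 = ball (0:ℂ) 1 := by
    rw [show (1 : ENNReal) = ((1:NNReal) : ENNReal) by simp, Metric.emetric_ball_nnreal]
    simp
  have hd : DifferentiableOn ℂ p.sum (ball 0 1) := by
    have := hpb.differentiableOn
    rwa [hball] at this
  have hm : ∀ z ∈ ball (0:ℂ) 1, ‖p.sum z‖ < 1 := by
    intro z hz
    rw [hFeq]
    exact hbound z (mem_ball_zero_iff.1 hz)
  have key := bohr_schwarz_pick hd hm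
  have h0 : p.sum 0 = c 0 := by
    rw [hFeq]
    rw [tsum_eq_single 0 (fun b hb => by simp [zero_pow hb])]
    simp
  have hderiv : deriv p.sum 0 = c 1 := by
    rw [hpb.hasFPowerSeriesAt.deriv]
    simp [hp, FormalMultilinearSeries.coeff_ofScalars]
  rwa [h0, hderiv] at key

/-- The rotation trick: the subseries along multiples of `k` also satisfies the hypotheses. -/
lemma bohr_rotated (c : ℕ → ℂ)
    (hconv : ∀ z : ℂ, ‖z‖ < 1 → Summable (fun k => c k * z ^ k))
    (hbound : ∀ z : ℂ, ‖z‖ < 1 → ‖∑' k : ℕ, c k * z ^ k‖ < 1)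
    {k : ℕ} (hk : 0 < k) :
    (∀ w : ℂ, ‖w‖ < 1 → Summable (fun m => c (k * m) * w ^ m)) ∧
    (∀ w : ℂ, ‖w‖ < 1 → ‖∑' m : ℕ, c (k * m) * w ^ m‖ < 1) := by
  have hk0 : k ≠ 0 := hk.ne'
  have hinj : Function.Injective (fun n : ℕ => k * n) := fun m n h =>
    Nat.eq_of_mul_eq_mul_left hk h
  set ω : ℂ := Complex.exp (2 * Real.pi * Complex.I / k) with hω
  have hωprim : IsPrimitiveRoot ω k := Complex.isPrimitiveRoot_exp k hk0
  have hωnorm : ‖ω‖ = 1 := by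
    rw [hω]
    have : 2 * (Real.pi : ℂ) * Complex.I / k = ((2 * Real.pi / k : ℝ) : ℂ) * Complex.I := by
      push_cast
      ring
    rw [this, Complex.norm_exp_ofReal_mul_I]
  have main : ∀ w : ℂ, ‖w‖ < 1 →
      Summable (fun m => c (k * m) * w ^ m) ∧ ‖∑' m : ℕ, c (k * m) * w ^ m‖ < 1 := by
    intro w hw
    obtain ⟨ζ, hζ⟩ := IsAlgClosed.exists_pow_nat_eq w hk
    have hζ1 : ‖ζ‖ < 1 := by
      by_contra h
      push_neg at h
      have h2 : (1:ℝ) ≤ ‖ζ‖ ^ k := one_le_pow₀ h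
      rw [← norm_pow, hζ] at h2
      linarith
    -- summability
    have habs := bohr_abs_summable c hconv ‖ζ‖ (norm_nonneg _) hζ1
    have habs2 : Summable (fun m => ‖c (k * m)‖ * ‖ζ‖ ^ (k * m)) :=
      habs.comp_injective hinj
    have hnormeq : ∀ m : ℕ, ‖c (k * m) * w ^ m‖ = ‖c (k * m)‖ * ‖ζ‖ ^ (k * m) := by
      intro m
      rw [norm_mul, norm_pow, ← hζ, norm_pow, ← pow_mul]
    have hsumm : Summable (fun m => c (k * m) * w ^ m) := by
      apply Summable.of_norm
      exact (summable_congr hnormeq).2 habs2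
    refine ⟨hsumm, ?_⟩
    -- rotation averaging identity
    have hsum_j : ∀ j : ℕ, Summable (fun m => c m * (ω ^ j * ζ) ^ m) := by
      intro j
      refine hconv _ ?_
      rw [norm_mul, norm_pow, hωnorm, one_pow, one_mul]
      exact hζ1
    have hterm : ∀ m : ℕ, ∑ j ∈ Finset.range k, c m * (ω ^ j * ζ) ^ m
        = if k ∣ m then (k : ℂ) * (c m * ζ ^ m) else 0 := by
      intro m
      have hj : ∀ j : ℕ, c m * (ω ^ j * ζ) ^ m = c m * ζ ^ m * (ω ^ m) ^ j := by
        intro j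
        rw [mul_pow, ← pow_mul, mul_comm j m, pow_mul]
        ring
      simp_rw [hj, ← Finset.mul_sum]
      by_cases hdvd : k ∣ m
      · have h1 : ω ^ m = 1 := (hωprim.pow_eq_one_iff_dvd m).2 hdvd
        rw [if_pos hdvd, h1]
        simp
        ring
      · have hne1 : ω ^ m ≠ 1 := fun h => hdvd ((hωprim.pow_eq_one_iff_dvd m).1 h)
        rw [if_neg hdvd, geom_sum_eq hne1, ← pow_mul, mul_comm m k, pow_mul,
          hωprim.pow_eq_one, one_pow, sub_self, zero_div, mul_zero]
    have hkey : ∑ j ∈ Finset.range k, ∑' m : ℕ, c m * (ω ^ j * ζ) ^ m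
        = (k : ℂ) * ∑' m : ℕ, c (k * m) * w ^ m := by
      rw [← Summable.tsum_finsetSum (fun j _ => hsum_j j)]
      rw [tsum_congr hterm]
      have hsupp : Function.support (fun m : ℕ => if k ∣ m then (k : ℂ) * (c m * ζ ^ m) else 0)
          ⊆ Set.range (fun n : ℕ => k * n) := by
        intro m hm
        by_cases hdvd : k ∣ m
        · obtain ⟨n, rfl⟩ := hdvd
          exact ⟨n, rfl⟩
        · simp [hdvd] at hm
      rw [← hinj.tsum_eq hsupp]
      have hre : ∀ n : ℕ, (if k ∣ k * n then (k : ℂ) * (c (k * n) * ζ ^ (k * n)) else 0)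
          = (k : ℂ) * (c (k * n) * w ^ n) := by
        intro n
        rw [if_pos (dvd_mul_right k n), pow_mul, hζ]
      calc (∑' n : ℕ, if k ∣ k * n then (k : ℂ) * (c (k * n) * ζ ^ (k * n)) else 0)
          = ∑' n : ℕ, (k : ℂ) * (c (k * n) * w ^ n) := tsum_congr hre
        _ = (k : ℂ) * ∑' n : ℕ, c (k * n) * w ^ n := tsum_mul_left
    have hlt : ‖∑ j ∈ Finset.range k, ∑' m : ℕ, c m * (ω ^ j * ζ) ^ m‖ < k := by
      calc ‖∑ j ∈ Finset.range k, ∑' m : ℕ, c m * (ω ^ j * ζ) ^ m‖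
          ≤ ∑ j ∈ Finset.range k, ‖∑' m : ℕ, c m * (ω ^ j * ζ) ^ m‖ := norm_sum_le _ _
        _ < ∑ _j ∈ Finset.range k, 1 := by
            refine Finset.sum_lt_sum_of_nonempty ⟨0, Finset.mem_range.2 hk⟩ ?_
            intro j _
            refine hbound _ ?_
            rw [norm_mul, norm_pow, hωnorm, one_pow, one_mul]
            exact hζ1
        _ = k := by simp
    rw [hkey, norm_mul, Complex.norm_natCast] at hlt
    have hkpos : (0:ℝ) < k := by exact_mod_cast hk
    have hlt2 : (k:ℝ) * ‖∑' m : ℕ, c (k * m) * w ^ m‖ < (k:ℝ) * 1 := by simpa using hlt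
    exact lt_of_mul_lt_mul_left hlt2 hkpos.le
  exact ⟨fun w hw => (main w hw).1, fun w hw => (main w hw).2⟩

set_option maxHeartbeats 1000000 in
/-- Bohr's theorem: if the power series converges and is bounded in modulus by 1
on the unit disk, then the series of absolute values is bounded by 1 for |z| < 1/3. -/
theorem bohr_theorem (c : ℕ → ℂ)
    (hconv : ∀ z : ℂ, ‖z‖ < 1 → Summable (fun k => c k * z ^ k))
    (hbound : ∀ z : ℂ, ‖z‖ < 1 → ‖∑' k : ℕ, c k * z ^ k‖ < 1) :
    ∀ z : ℂ, ‖z‖ < 1 / 3 → ∃ s : ℝ, HasSum (fun k => ‖c k‖ * ‖z‖ ^ k) s ∧ s < 1 := by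
  intro z hz
  have hr0 : (0:ℝ) ≤ ‖z‖ := norm_nonneg z
  have hr1 : ‖z‖ < 1 := by linarith
  have hs : Summable (fun k => ‖c k‖ * ‖z‖ ^ k) := bohr_abs_summable c hconv ‖z‖ hr0 hr1
  refine ⟨_, hs.hasSum, ?_⟩
  set a : ℝ := ‖c 0‖ with haeq
  have htsum0 : (∑' k : ℕ, c k * (0:ℂ) ^ k) = c 0 := by
    rw [tsum_eq_single 0 (fun b hb => by simp [zero_pow hb])]
    simp
  have ha : a < 1 := by
    have := hbound 0 (by simp)
    rwa [htsum0] at this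
  have ha0 : 0 ≤ a := norm_nonneg _
  have hck : ∀ m : ℕ, m ≠ 0 → ‖c m‖ ≤ 1 - a ^ 2 := by
    intro m hm
    have hrot := bohr_rotated c hconv hbound (Nat.pos_of_ne_zero hm)
    have := bohr_coeff_one (fun n => c (m * n)) hrot.1 hrot.2
    simpa [haeq] using this
  have hsplit : ∑' n : ℕ, ‖c n‖ * ‖z‖ ^ n = a + ∑' n : ℕ, ‖c (n + 1)‖ * ‖z‖ ^ (n + 1) := by
    rw [Summable.tsum_eq_zero_add hs]
    simp [haeq]
  have htail_s : Summable (fun n => ‖c (n + 1)‖ * ‖z‖ ^ (n + 1)) :=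
    (summable_nat_add_iff 1).2 hs
  have hgeo : Summable (fun n : ℕ => (1 - a ^ 2) * ‖z‖ ^ (n + 1)) := by
    simp_rw [pow_succ]
    exact ((summable_geometric_of_lt_one hr0 hr1).mul_right _).mul_left _
  have htail : ∑' n : ℕ, ‖c (n + 1)‖ * ‖z‖ ^ (n + 1)
      ≤ ∑' n : ℕ, (1 - a ^ 2) * ‖z‖ ^ (n + 1) :=
    Summable.tsum_le_tsum (fun n => mul_le_mul_of_nonneg_right (hck (n + 1) (Nat.succ_ne_zero n))
      (by positivity)) htail_s hgeo
  have hgeoval : ∑' n : ℕ, (1 - a ^ 2) * ‖z‖ ^ (n + 1)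
      = (1 - a ^ 2) * (‖z‖ * (1 - ‖z‖)⁻¹) := by
    rw [tsum_mul_left]
    simp_rw [pow_succ]
    rw [tsum_mul_right, tsum_geometric_of_lt_one hr0 hr1]
    ring
  have h1z : (0:ℝ) < 1 - ‖z‖ := by linarith
  have hhalf : ‖z‖ * (1 - ‖z‖)⁻¹ ≤ 1 / 2 := by
    rw [← div_eq_mul_inv, div_le_div_iff₀ h1z two_pos]
    linarith
  have ht0 : 0 ≤ ‖z‖ * (1 - ‖z‖)⁻¹ := by positivity
  have ha2 : (0:ℝ) ≤ 1 - a ^ 2 := by nlinarith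
  have hfin : ∑' n : ℕ, ‖c n‖ * ‖z‖ ^ n ≤ a + (1 - a ^ 2) * (1 / 2) := by
    rw [hsplit]
    have := htail.trans_eq hgeoval
    nlinarith [mul_le_mul_of_nonneg_left hhalf ha2]
  have : a + (1 - a ^ 2) * (1 / 2) < 1 := by nlinarith [sq_nonneg (1 - a)]
  linarith
end

section
/- If f is holomorphic on the unit disk with |f(z)| < 1 for all |z| < 1, and f(z) = ∑ c_k z^k, then |c_k| ≤ 1 - |c_0|² for every k ≥ 1. -/
open Metric Set Complex

lemma moebius_lt_one {a w : ℂ} (ha : ‖a‖ < 1) (hw : ‖w‖ < 1) :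
    ‖(w - a) / (1 - (starRingEnd ℂ) a * w)‖ < 1 := by
  have ha' : Complex.normSq a < 1 := by
    rw [← Complex.sq_norm]; nlinarith [norm_nonneg a]
  have hw' : Complex.normSq w < 1 := by
    rw [← Complex.sq_norm]; nlinarith [norm_nonneg w]
  have hden : Complex.normSq (1 - (starRingEnd ℂ) a * w) - Complex.normSq (w - a)
      = (1 - Complex.normSq a) * (1 - Complex.normSq w) := by
    simp only [Complex.normSq_apply, Complex.sub_re, Complex.sub_im, Complex.mul_re,
      Complex.mul_im, Complex.one_re, Complex.one_im, Complex.conj_re, Complex.conj_im]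
    ring
  have h2 : Complex.normSq (w - a) < Complex.normSq (1 - (starRingEnd ℂ) a * w) := by
    nlinarith [Complex.normSq_nonneg a, Complex.normSq_nonneg w]
  have hdz : (1 - (starRingEnd ℂ) a * w) ≠ 0 := by
    intro h; rw [h] at h2
    exact absurd h2 (by simp [Complex.normSq_nonneg])
  rw [norm_div, div_lt_one (norm_pos_iff.2 hdz)]
  have h3 : ‖w - a‖ ^ 2 < ‖1 - (starRingEnd ℂ) a * w‖ ^ 2 := by
    rw [Complex.sq_norm, Complex.sq_norm]; exact h2
  exact lt_of_pow_lt_pow_left₀ 2 (norm_nonneg _) h3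

lemma schwarz_pick_zero {h : ℂ → ℂ} (hd : DifferentiableOn ℂ h (ball 0 1))
    (hm : MapsTo h (ball 0 1) (ball 0 1)) : ‖deriv h 0‖ ≤ 1 - ‖h 0‖ ^ 2 := by
  set a := h 0 with ha_def
  have h0 : (0:ℂ) ∈ ball (0:ℂ) 1 := mem_ball_self one_pos
  have ha : ‖a‖ < 1 := mem_ball_zero_iff.1 (hm h0)
  have hdenne : ∀ z ∈ ball (0:ℂ) 1, (1 - (starRingEnd ℂ) a * h z) ≠ 0 := by
    intro z hz hcon
    have hz1 : ‖h z‖ < 1 := mem_ball_zero_iff.1 (hm hz)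
    have h1 : ‖(starRingEnd ℂ) a * h z‖ < 1 := by
      rw [norm_mul, RCLike.norm_conj]
      nlinarith [norm_nonneg a, norm_nonneg (h z)]
    have : (1:ℂ) = (starRingEnd ℂ) a * h z := by linear_combination hcon
    rw [← this] at h1; simp at h1
  set g := fun z => (h z - a) / (1 - (starRingEnd ℂ) a * h z) with hg_def
  have hgd : DifferentiableOn ℂ g (ball 0 1) :=
    DifferentiableOn.div (hd.sub (differentiableOn_const _))
      ((differentiableOn_const _).sub ((differentiableOn_const _).mul hd)) hdenne
  have hg0 : g 0 = 0 := by simp [hg_def, ← ha_def]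
  have hgm : MapsTo g (ball 0 1) (ball (g 0) 1) := by
    intro z hz
    rw [hg0, mem_ball_zero_iff]
    exact moebius_lt_one ha (mem_ball_zero_iff.1 (hm hz))
  have hder : ‖deriv g 0‖ ≤ 1 / 1 := norm_deriv_le_div_of_mapsTo_ball hgd (hgm.mono_right ball_subset_closedBall) one_pos
  have hhd : DifferentiableAt ℂ h 0 := hd.differentiableAt (isOpen_ball.mem_nhds h0)
  have hh : HasDerivAt h (deriv h 0) 0 := hhd.hasDerivAt
  have hv0 : (1 - (starRingEnd ℂ) a * h 0) = ((1 - ‖a‖^2 : ℝ) : ℂ) := by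
    have hca : (starRingEnd ℂ) a * a = (Complex.normSq a : ℂ) := by
      rw [mul_comm, Complex.mul_conj]
    rw [← ha_def, hca, ← Complex.sq_norm]
    push_cast
    ring
  have hvne : (1 - (starRingEnd ℂ) a * h 0) ≠ 0 := hdenne 0 h0
  have hgder : HasDerivAt g
      ((deriv h 0 * (1 - (starRingEnd ℂ) a * h 0) - (h 0 - a) * (-((starRingEnd ℂ) a * deriv h 0)))
        / (1 - (starRingEnd ℂ) a * h 0) ^ 2) 0 :=
    ((hh.sub_const a).div (((hasDerivAt_const _ (1:ℂ)).sub
      ((hasDerivAt_const _ ((starRingEnd ℂ) a)).mul hh)).congr_deriv (by ring)) hvne)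
  have hsimp : deriv g 0 = deriv h 0 / (1 - (starRingEnd ℂ) a * h 0) := by
    rw [hgder.deriv, div_eq_div_iff (pow_ne_zero 2 hvne) hvne, ← ha_def]
    ring
  have hpos : (0:ℝ) < 1 - ‖a‖^2 := by nlinarith [norm_nonneg a]
  have hnorm : ‖deriv g 0‖ = ‖deriv h 0‖ / (1 - ‖a‖^2) := by
    rw [hsimp, norm_div, hv0, Complex.norm_real, Real.norm_of_nonneg hpos.le]
  rw [hnorm, div_le_iff₀ hpos] at hder
  simpa using hder

/-- Wiener's coefficient estimate: if f maps the unit disk to itself and has Taylor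
coefficients c, then |c_k| ≤ 1 - |c_0|² for k ≥ 1. -/
theorem wiener_coefficient_estimate (f : ℂ → ℂ) (c : ℕ → ℂ)
    (hf : DifferentiableOn ℂ f (Metric.ball (0 : ℂ) 1))
    (hc : ∀ z ∈ Metric.ball (0 : ℂ) 1, HasSum (fun k => c k * z ^ k) (f z))
    (hb : ∀ z ∈ Metric.ball (0 : ℂ) 1, ‖f z‖ < 1) :
    ∀ k : ℕ, 1 ≤ k → ‖c k‖ ≤ 1 - ‖c 0‖ ^ 2 := by
  intro k hk
  have hk0 : k ≠ 0 := by omega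
  -- coefficient growth bound
  have hbound : ∀ s : ℝ, 0 ≤ s → s < 1 → ∃ C : ℝ, ∀ n, ‖c n‖ * s ^ n ≤ C := by
    intro s hs0 hs1
    have hz : (s : ℂ) ∈ Metric.ball (0:ℂ) 1 := by
      rw [mem_ball_zero_iff, Complex.norm_real, Real.norm_of_nonneg hs0]; exact hs1
    have hsum := (hc _ hz).summable
    have hns : Summable fun n => ‖c n * (s:ℂ) ^ n‖ := summable_norm_iff.2 hsum
    refine ⟨∑' n, ‖c n * (s:ℂ) ^ n‖, fun n => ?_⟩
    have := hns.le_tsum n (fun j _ => norm_nonneg _)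
    simpa [norm_mul, norm_pow, Complex.norm_real, Real.norm_of_nonneg hs0,
      _root_.abs_of_nonneg hs0] using this
  -- the symmetrized power series
  set p : FormalMultilinearSeries ℂ ℂ ℂ :=
    fun n => ContinuousMultilinearMap.mkPiRing ℂ (Fin n) (c (k * n)) with hp_def
  have hpn : ∀ n, ‖p n‖ = ‖c (k * n)‖ := fun n =>
    ContinuousMultilinearMap.norm_mkPiRing _
  have hpapp : ∀ (n : ℕ) (w : ℂ), (p n fun _ => w) = c (k * n) * w ^ n := by
    intro n w
    simp [hp_def, ContinuousMultilinearMap.mkPiRing_apply, smul_eq_mul, mul_comm]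
  have hrad : 1 ≤ p.radius := by
    apply ENNReal.le_of_forall_nnreal_lt
    intro r hr
    have hr1 : (r : ℝ) < 1 := by exact_mod_cast hr
    set s : ℝ := (r : ℝ) ^ ((k : ℝ)⁻¹) with hs_def
    have hs0 : 0 ≤ s := Real.rpow_nonneg r.coe_nonneg _
    have hs1 : s < 1 := by
      rcases eq_or_lt_of_le r.coe_nonneg with h | h
      · rw [hs_def, ← h, Real.zero_rpow (by positivity)]; norm_num
      · exact Real.rpow_lt_one r.coe_nonneg hr1 (by positivity)
    have hsk : s ^ k = (r : ℝ) := by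
      rw [hs_def, ← Real.rpow_natCast (_ ^ _) k, ← Real.rpow_mul r.coe_nonneg,
        inv_mul_cancel₀ (by exact_mod_cast hk0 : (k:ℝ) ≠ 0), Real.rpow_one]
    obtain ⟨C, hC⟩ := hbound s hs0 hs1
    apply p.le_radius_of_bound C
    intro n
    rw [hpn n]
    calc ‖c (k * n)‖ * (r : ℝ) ^ n = ‖c (k * n)‖ * s ^ (k * n) := by
          rw [← hsk, ← pow_mul]
      _ ≤ C := hC _
  have hradpos : (0 : ENNReal) < p.radius := lt_of_lt_of_le one_pos hrad
  have hball : HasFPowerSeriesOnBall p.sum p 0 1 :=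
    (p.hasFPowerSeriesOnBall hradpos).mono one_pos hrad
  set h : ℂ → ℂ := p.sum with hh_def
  have hballs : Metric.ball (0:ℂ) 1 = Metric.eball (0:ℂ) 1 := by
    have h1 : ((1 : NNReal) : ENNReal) = 1 := by norm_num
    rw [← h1, Metric.emetric_ball_nnreal]; norm_num
  have hdiff : DifferentiableOn ℂ h (Metric.ball (0:ℂ) 1) := by
    rw [hballs]; exact hball.differentiableOn
  -- value of h as a sum
  have hhsum : ∀ w ∈ Metric.ball (0:ℂ) 1, HasSum (fun n => c (k * n) * w ^ n) (h w) := by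
    intro w hw
    have hmem : w ∈ Metric.eball (0:ℂ) p.radius := by
      rw [Metric.mem_eball, edist_zero_right]
      refine lt_of_lt_of_le ?_ hrad
      rw [← ENNReal.coe_one, enorm_eq_nnnorm, ENNReal.coe_lt_coe]
      exact_mod_cast mem_ball_zero_iff.1 hw
    have := p.hasSum hmem
    simpa only [hpapp] using this
  -- h(0) = c 0 and deriv h 0 = c k
  have hh0 : h 0 = c 0 := by
    have := hball.coeff_zero (fun _ => 0)
    rw [← this, hpapp 0 0]
    simp
  have hhd : deriv h 0 = c k := by
    have := hball.hasFPowerSeriesAt.deriv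
    rw [this, hpapp 1 1]
    simp
  -- primitive root
  set ω : ℂ := Complex.exp (2 * ↑Real.pi * Complex.I / (k:ℂ)) with hω_def
  have hprim : IsPrimitiveRoot ω k := Complex.isPrimitiveRoot_exp k hk0
  have hωk : ω ^ k = 1 := hprim.pow_eq_one
  have hωabs : ‖ω‖ = 1 := by
    have h1 : ‖ω‖ ^ k = 1 := by rw [← norm_pow, hωk, norm_one]
    have h1' : ‖ω‖ ^ k = 1 ^ k := by rw [one_pow]; exact h1
    exact (pow_left_inj₀ (norm_nonneg ω) zero_le_one hk0).1 h1'
  -- maps to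
  have hmaps : MapsTo h (Metric.ball (0:ℂ) 1) (Metric.ball (0:ℂ) 1) := by
    intro w hw
    rw [mem_ball_zero_iff]
    by_cases hw0 : w = 0
    · subst hw0
      rw [hh0]
      have h0b : (0:ℂ) ∈ Metric.ball (0:ℂ) 1 := mem_ball_self one_pos
      have hf0 : f 0 = c 0 := by
        have h1 := hc 0 h0b
        have h2 : HasSum (fun n => c n * (0:ℂ) ^ n) (c 0 * (0:ℂ) ^ 0) :=
          hasSum_single 0 (fun n hn => by simp [zero_pow hn])
        simpa using h1.unique h2
      rw [← hf0]; exact hb 0 h0b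
    · -- k-th root
      set z : ℂ := w ^ ((k : ℂ)⁻¹) with hz_def
      have hzk : z ^ k = w := Complex.cpow_nat_inv_pow w hk0
      have hwa : ‖w‖ < 1 := mem_ball_zero_iff.1 hw
      have hza : ‖z‖ < 1 := by
        have : ((k:ℂ))⁻¹ = (((k:ℝ)⁻¹ : ℝ) : ℂ) := by push_cast; ring
        rw [hz_def, this, norm_cpow_real]
        exact Real.rpow_lt_one (norm_nonneg w)
          (by exact hwa) (by positivity)
      have hmem : ∀ j : ℕ, ω ^ j * z ∈ Metric.ball (0:ℂ) 1 := by
        intro j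
        rw [mem_ball_zero_iff, norm_mul, norm_pow, hωabs, one_pow, one_mul]
        exact hza
      set S : ℂ := ∑ j ∈ Finset.range k, f (ω ^ j * z) with hS_def
      have hsum1 : HasSum (fun n => ∑ j ∈ Finset.range k, c n * (ω ^ j * z) ^ n) S :=
        hasSum_sum (fun j _ => hc _ (hmem j))
      have hkey : ∀ n, (∑ j ∈ Finset.range k, c n * (ω ^ j * z) ^ n)
          = if k ∣ n then (k : ℂ) * (c n * z ^ n) else 0 := by
        intro n
        have : ∀ j, c n * (ω ^ j * z) ^ n = (c n * z ^ n) * (ω ^ n) ^ j := by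
          intro j
          rw [mul_pow, ← pow_mul, mul_comm j n, pow_mul]
          ring
        rw [Finset.sum_congr rfl (fun j _ => this j), ← Finset.mul_sum]
        by_cases hdvd : k ∣ n
        · rw [if_pos hdvd, (hprim.pow_eq_one_iff_dvd n).2 hdvd]
          simp [mul_comm]
        · rw [if_neg hdvd]
          have hne : ω ^ n ≠ 1 := fun hcon => hdvd ((hprim.pow_eq_one_iff_dvd n).1 hcon)
          rw [geom_sum_eq hne, ← pow_mul, mul_comm n k, pow_mul, hωk, one_pow]
          simp
      have hsum2 : HasSum (fun n => if k ∣ n then (k : ℂ) * (c n * z ^ n) else 0) S := by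
        rwa [funext hkey] at hsum1
      have hinj : Function.Injective (fun m : ℕ => k * m) := fun a b hab => by
        simpa [hk0] using hab
      have hvanish : ∀ n ∉ Set.range (fun m : ℕ => k * m),
          (if k ∣ n then (k : ℂ) * (c n * z ^ n) else 0) = 0 := by
        intro n hn
        rw [if_neg]
        intro ⟨m, hm⟩
        exact hn ⟨m, hm.symm⟩
      have hsum3 : HasSum (fun m => (k : ℂ) * (c (k * m) * w ^ m)) S := by
        have h3 := (hinj.hasSum_iff hvanish).2 hsum2
        have e : ((fun n => if k ∣ n then (k : ℂ) * (c n * z ^ n) else 0)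
            ∘ (fun m : ℕ => k * m)) = fun m => (k : ℂ) * (c (k * m) * w ^ m) := by
          funext m
          simp only [Function.comp, if_pos (dvd_mul_right k m)]
          rw [pow_mul, hzk]
        rwa [e] at h3
      have hkne : (k : ℂ) ≠ 0 := by exact_mod_cast hk0
      have hsum4 : HasSum (fun m => c (k * m) * w ^ m) ((k : ℂ)⁻¹ * S) := by
        have := hsum3.mul_left ((k : ℂ)⁻¹)
        simpa [← mul_assoc, inv_mul_cancel₀ hkne] using this
      have hhw : h w = (k : ℂ)⁻¹ * S := (hhsum w hw).unique hsum4
      have hSlt : ‖S‖ < k := by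
        calc ‖S‖ ≤ ∑ j ∈ Finset.range k, ‖f (ω ^ j * z)‖ := norm_sum_le _ _
          _ < ∑ _j ∈ Finset.range k, (1:ℝ) :=
              Finset.sum_lt_sum_of_nonempty (Finset.nonempty_range_iff.2 hk0)
                (fun j _ => hb _ (hmem j))
          _ = k := by simp
      have hkpos : (0:ℝ) < k := by exact_mod_cast Nat.pos_of_ne_zero hk0
      rw [hhw, norm_mul, norm_inv, Complex.norm_natCast]
      rw [inv_mul_eq_div, div_lt_one hkpos]
      exact hSlt
  calc ‖c k‖ = ‖deriv h 0‖ := by rw [hhd]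
    _ ≤ 1 - ‖h 0‖ ^ 2 := schwarz_pick_zero hdiff hmaps
    _ = 1 - ‖c 0‖ ^ 2 := by rw [hh0]
end

section
/- For any square-summable sequence of nonnegative reals (x_n)_{n≥1}, the double series ∑_{m=1}^∞ ∑_{n=1}^∞ x_m x_n/(m+n) satisfies ∑_{m,n} x_m x_n/(m+n) ≤ π ∑_n x_n². -/
open Real Finset

/-- Mean value inequality for arctan on `[y, z]` with `0 ≤ y`. -/
lemma arctan_slope_lower' {y z : ℝ} (hy : 0 ≤ y) (hyz : y < z) :
    (z - y) / (1 + z ^ 2) ≤ Real.arctan z - Real.arctan y := by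
  obtain ⟨c, hc, hc'⟩ := exists_hasDerivAt_eq_slope Real.arctan (fun t => 1 / (1 + t ^ 2)) hyz
    Real.continuous_arctan.continuousOn (fun t _ => Real.hasDerivAt_arctan t)
  have hzy : (0:ℝ) < z - y := by linarith
  have hc2 : (0:ℝ) < 1 + c ^ 2 := by positivity
  have h1 : Real.arctan z - Real.arctan y = (z - y) * (1 / (1 + c ^ 2)) := by
    field_simp at hc' ⊢
    nlinarith [hc']
  rw [h1, div_eq_mul_one_div]
  apply mul_le_mul_of_nonneg_left _ (le_of_lt hzy)
  apply one_div_le_one_div_of_le hc2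
  have hc0 : 0 < c := lt_of_le_of_lt hy hc.1
  nlinarith [hc.2, hc0]

/-- One telescoping step. -/
lemma step_bound (a : ℝ) (ha : 0 < a) (n : ℕ) :
    Real.sqrt a / (Real.sqrt ((n : ℝ) + 1) * (a + ((n : ℝ) + 1))) ≤
      2 * Real.arctan (Real.sqrt ((n : ℝ) + 1) / Real.sqrt a) -
        2 * Real.arctan (Real.sqrt (n : ℝ) / Real.sqrt a) := by
  have hsa : 0 < Real.sqrt a := Real.sqrt_pos.mpr ha
  set y := Real.sqrt (n : ℝ) / Real.sqrt a with hy
  set z := Real.sqrt ((n : ℝ) + 1) / Real.sqrt a with hz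
  have hn1 : (0:ℝ) < (n:ℝ) + 1 := by positivity
  have hsn1 : 0 < Real.sqrt ((n:ℝ) + 1) := Real.sqrt_pos.mpr hn1
  have hy0 : 0 ≤ y := by positivity
  have hz0 : 0 < z := by positivity
  have hyz : y < z := by
    apply div_lt_div_of_pos_right _ hsa
    exact Real.sqrt_lt_sqrt (Nat.cast_nonneg n) (by linarith)
  have key := arctan_slope_lower' hy0 hyz
  have hz2 : z ^ 2 = ((n:ℝ) + 1) / a := by
    rw [hz, div_pow, Real.sq_sqrt hn1.le, Real.sq_sqrt ha.le]
  have hy2 : y ^ 2 = (n:ℝ) / a := by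
    rw [hy, div_pow, Real.sq_sqrt (Nat.cast_nonneg n), Real.sq_sqrt ha.le]
  have hsqn1 : Real.sqrt ((n:ℝ) + 1) = Real.sqrt a * z := by
    rw [hz]; field_simp
  have hdiff : a * (z ^ 2 - y ^ 2) = 1 := by
    rw [hz2, hy2]; field_simp; ring
  have hmain : Real.sqrt a / (Real.sqrt ((n : ℝ) + 1) * (a + ((n : ℝ) + 1))) ≤
      2 * ((z - y) / (1 + z ^ 2)) := by
    have han1 : a + ((n:ℝ) + 1) = a * (1 + z ^ 2) := by
      rw [hz2]; field_simp
    rw [hsqn1, han1]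
    have hLHS : Real.sqrt a / (Real.sqrt a * z * (a * (1 + z ^ 2)))
        = 1 / (z * (a * (1 + z ^ 2))) := by
      rw [div_eq_div_iff (by positivity) (by positivity)]; ring
    rw [hLHS, ← mul_div_assoc, div_le_div_iff₀ (by positivity) (by positivity)]
    nlinarith [sq_nonneg (z - y), mul_pos ha hz0, hdiff,
      mul_nonneg (mul_nonneg ha.le (sq_nonneg (z - y))) (by positivity : (0:ℝ) ≤ 1 + z ^ 2),
      mul_nonneg (mul_nonneg ha.le hy0) (sub_nonneg.mpr hyz.le)]
  linarith [key, hmain]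

/-- Partial sum bound. -/
lemma sum_bound (a : ℝ) (ha : 0 < a) (N : ℕ) :
    ∑ n ∈ Finset.range N, Real.sqrt a / (Real.sqrt ((n : ℝ) + 1) * (a + ((n : ℝ) + 1)))
      ≤ Real.pi := by
  have h : ∑ n ∈ Finset.range N, Real.sqrt a / (Real.sqrt ((n : ℝ) + 1) * (a + ((n : ℝ) + 1)))
      ≤ ∑ n ∈ Finset.range N,
        ((fun k : ℕ => 2 * Real.arctan (Real.sqrt (k : ℝ) / Real.sqrt a)) (n + 1)
          - (fun k : ℕ => 2 * Real.arctan (Real.sqrt (k : ℝ) / Real.sqrt a)) n) := by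
    apply Finset.sum_le_sum
    intro n _
    have := step_bound a ha n
    simpa [Nat.cast_add, Nat.cast_one] using this
  rw [Finset.sum_range_sub (fun k : ℕ => 2 * Real.arctan (Real.sqrt (k : ℝ) / Real.sqrt a))] at h
  simp only [Nat.cast_zero, Real.sqrt_zero, zero_div, Real.arctan_zero, mul_zero, sub_zero] at h
  have := Real.arctan_lt_pi_div_two (Real.sqrt (N : ℝ) / Real.sqrt a)
  linarith

/-- tsum version of the key bound. -/
lemma tsum_bound (a : ℝ) (ha : 0 < a) :
    ∑' n : ℕ, ENNReal.ofReal (Real.sqrt a / (Real.sqrt ((n : ℝ) + 1) * (a + ((n : ℝ) + 1))))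
      ≤ ENNReal.ofReal Real.pi := by
  rw [ENNReal.tsum_eq_iSup_sum]
  apply iSup_le
  intro s
  obtain ⟨N, hN⟩ := s.exists_nat_subset_range
  calc ∑ n ∈ s, ENNReal.ofReal (Real.sqrt a / (Real.sqrt ((n : ℝ) + 1) * (a + ((n : ℝ) + 1))))
      ≤ ∑ n ∈ Finset.range N,
          ENNReal.ofReal (Real.sqrt a / (Real.sqrt ((n : ℝ) + 1) * (a + ((n : ℝ) + 1)))) :=
        Finset.sum_le_sum_of_subset hN
    _ = ENNReal.ofReal (∑ n ∈ Finset.range N,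
          Real.sqrt a / (Real.sqrt ((n : ℝ) + 1) * (a + ((n : ℝ) + 1)))) := by
        rw [ENNReal.ofReal_sum_of_nonneg]
        intro i _
        positivity
    _ ≤ ENNReal.ofReal Real.pi := ENNReal.ofReal_le_ofReal (sum_bound a ha N)

/-- Hilbert's double series theorem with the sharp constant π. Here `x n`
denotes x_{n+1}, so the sums run over the positive integers. -/
theorem hilbert_inequality_sharp_constant (x : ℕ → ℝ) (hx : ∀ n, 0 ≤ x n)
    (hsq : Summable fun n => x n ^ 2) :
    (∑' m : ℕ, ∑' n : ℕ,
        ENNReal.ofReal (x m * x n / ((m : ℝ) + 1 + ((n : ℝ) + 1)))) ≤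
      ENNReal.ofReal (Real.pi * ∑' n : ℕ, x n ^ 2) := by
  classical
  set A : ℕ → ℕ → ENNReal := fun m n => ENNReal.ofReal (x m ^ 2 / 2 *
      (Real.sqrt ((m : ℝ) + 1) / (Real.sqrt ((n : ℝ) + 1) * ((m : ℝ) + 1 + ((n : ℝ) + 1)))))
    with hA
  have hD : ∀ m n : ℕ, (0:ℝ) < (m : ℝ) + 1 + ((n : ℝ) + 1) := by
    intro m n; positivity
  -- pointwise bound
  have key : ∀ m n : ℕ,
      ENNReal.ofReal (x m * x n / ((m : ℝ) + 1 + ((n : ℝ) + 1))) ≤ A m n + A n m := by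
    intro m n
    have hp : 0 < Real.sqrt ((m:ℝ) + 1) := Real.sqrt_pos.mpr (by positivity)
    have hq : 0 < Real.sqrt ((n:ℝ) + 1) := Real.sqrt_pos.mpr (by positivity)
    set p := Real.sqrt ((m:ℝ) + 1)
    set q := Real.sqrt ((n:ℝ) + 1)
    set D := (m : ℝ) + 1 + ((n : ℝ) + 1) with hDdef
    have hDpos : (0:ℝ) < D := hD m n
    have hreal : x m * x n / D ≤ x m ^ 2 / 2 * (p / (q * D)) + x n ^ 2 / 2 * (q / (p * D)) := by
      have e : x m ^ 2 / 2 * (p / (q * D)) + x n ^ 2 / 2 * (q / (p * D)) - x m * x n / D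
          = (x m * p - x n * q) ^ 2 / (2 * p * q * D) := by
        field_simp
        ring
      nlinarith [div_nonneg (sq_nonneg (x m * p - x n * q))
        (by positivity : (0:ℝ) ≤ 2 * p * q * D), e]
    calc ENNReal.ofReal (x m * x n / D)
        ≤ ENNReal.ofReal (x m ^ 2 / 2 * (p / (q * D)) + x n ^ 2 / 2 * (q / (p * D))) :=
          ENNReal.ofReal_le_ofReal hreal
      _ = A m n + A n m := by
          rw [ENNReal.ofReal_add (by positivity) (by positivity)]
          have hDsymm : ((n : ℝ) + 1 + ((m : ℝ) + 1)) = D := by rw [hDdef]; ring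
          rw [hA]
          simp only
          rw [hDsymm]
    -- end key
  have hx2 : ∀ m : ℕ, (0:ℝ) ≤ x m ^ 2 / 2 := fun m => by positivity
  -- bound the double sum of A
  have hAsum : (∑' m : ℕ, ∑' n : ℕ, A m n)
      ≤ ENNReal.ofReal Real.pi * ENNReal.ofReal ((∑' n : ℕ, x n ^ 2) / 2) := by
    have h1 : ∀ m : ℕ, (∑' n : ℕ, A m n) ≤ ENNReal.ofReal (x m ^ 2 / 2) * ENNReal.ofReal Real.pi := by
      intro m
      have hfact : ∀ n : ℕ, A m n = ENNReal.ofReal (x m ^ 2 / 2) *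
          ENNReal.ofReal (Real.sqrt ((m : ℝ) + 1) /
            (Real.sqrt ((n : ℝ) + 1) * ((m : ℝ) + 1 + ((n : ℝ) + 1)))) := by
        intro n
        rw [hA]
        simp only
        rw [← ENNReal.ofReal_mul (hx2 m)]
      calc (∑' n : ℕ, A m n)
          = ENNReal.ofReal (x m ^ 2 / 2) * ∑' n : ℕ,
              ENNReal.ofReal (Real.sqrt ((m : ℝ) + 1) /
                (Real.sqrt ((n : ℝ) + 1) * ((m : ℝ) + 1 + ((n : ℝ) + 1)))) := by
            rw [← ENNReal.tsum_mul_left]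
            exact tsum_congr hfact
        _ ≤ ENNReal.ofReal (x m ^ 2 / 2) * ENNReal.ofReal Real.pi := by
            apply mul_le_mul_right
            exact tsum_bound ((m : ℝ) + 1) (by positivity)
    calc (∑' m : ℕ, ∑' n : ℕ, A m n)
        ≤ ∑' m : ℕ, ENNReal.ofReal (x m ^ 2 / 2) * ENNReal.ofReal Real.pi :=
          ENNReal.tsum_le_tsum h1
      _ = ENNReal.ofReal Real.pi * ∑' m : ℕ, ENNReal.ofReal (x m ^ 2 / 2) := by
          rw [ENNReal.tsum_mul_right, mul_comm]
      _ = ENNReal.ofReal Real.pi * ENNReal.ofReal ((∑' n : ℕ, x n ^ 2) / 2) := by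
          congr 1
          rw [← ENNReal.ofReal_tsum_of_nonneg hx2 (hsq.div_const 2)]
          congr 1
          exact tsum_div_const
  have hcomm : (∑' m : ℕ, ∑' n : ℕ, A n m) = ∑' m : ℕ, ∑' n : ℕ, A m n := ENNReal.tsum_comm
  calc (∑' m : ℕ, ∑' n : ℕ, ENNReal.ofReal (x m * x n / ((m : ℝ) + 1 + ((n : ℝ) + 1))))
      ≤ ∑' m : ℕ, ∑' n : ℕ, (A m n + A n m) :=
        ENNReal.tsum_le_tsum fun m => ENNReal.tsum_le_tsum fun n => key m n
    _ = (∑' m : ℕ, ∑' n : ℕ, A m n) + ∑' m : ℕ, ∑' n : ℕ, A n m := by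
        simp only [ENNReal.tsum_add]
    _ = (∑' m : ℕ, ∑' n : ℕ, A m n) + ∑' m : ℕ, ∑' n : ℕ, A m n := by rw [hcomm]
    _ ≤ ENNReal.ofReal Real.pi * ENNReal.ofReal ((∑' n : ℕ, x n ^ 2) / 2)
        + ENNReal.ofReal Real.pi * ENNReal.ofReal ((∑' n : ℕ, x n ^ 2) / 2) :=
        add_le_add hAsum hAsum
    _ = ENNReal.ofReal (Real.pi * ∑' n : ℕ, x n ^ 2) := by
        rw [← two_mul, ← mul_assoc]
        rw [show (2 : ENNReal) * ENNReal.ofReal Real.pi = ENNReal.ofReal (2 * Real.pi) by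
          rw [ENNReal.ofReal_mul (by norm_num)]; norm_num]
        rw [← ENNReal.ofReal_mul (by positivity)]
        congr 1
        have hS : (0:ℝ) ≤ ∑' n : ℕ, x n ^ 2 := tsum_nonneg fun n => sq_nonneg _
        field_simp
end

section
/- There exists a finite constant C such that for every square-summable sequence of complex numbers (x_n)_{n≥1}, |∑_{m=1}^∞ ∑_{n=1}^∞ x_m x_n/(m+n)| ≤ C ∑_{n=1}^∞ |x_n|². -/
open Finset

private lemma inv_sqrt_sum_le (N : ℕ) :
    ∑ n ∈ Finset.range N, 1 / Real.sqrt (n + 1) ≤ 2 * Real.sqrt N := by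
  induction N with
  | zero => simp
  | succ N ih =>
    rw [Finset.sum_range_succ]
    have h1 : (0:ℝ) < Real.sqrt ((N:ℝ) + 1) := Real.sqrt_pos.2 (by positivity)
    have h0 : (0:ℝ) ≤ Real.sqrt N := Real.sqrt_nonneg _
    have e1 : Real.sqrt (N:ℝ) ^ 2 = (N:ℝ) := Real.sq_sqrt (by positivity)
    have e2 : Real.sqrt ((N:ℝ) + 1) ^ 2 = (N:ℝ) + 1 := Real.sq_sqrt (by positivity)
    have key : 1 / Real.sqrt ((N:ℝ) + 1) ≤ 2 * Real.sqrt ((N:ℝ)+1) - 2 * Real.sqrt N := by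
      rw [div_le_iff₀ h1]
      nlinarith [sq_nonneg (Real.sqrt ((N:ℝ)+1) - Real.sqrt (N:ℝ))]
    push_cast
    linarith

private lemma term_telescope (n : ℕ) (hn : 1 ≤ n) :
    1 / (Real.sqrt (n + 1) * (n + 1)) ≤ 2 * (1 / Real.sqrt n - 1 / Real.sqrt (n + 1)) := by
  have hs : (0:ℝ) < Real.sqrt n := Real.sqrt_pos.2 (by exact_mod_cast hn)
  have ht : (0:ℝ) < Real.sqrt ((n:ℝ) + 1) := Real.sqrt_pos.2 (by positivity)
  have e1 : Real.sqrt (n:ℝ) ^ 2 = (n:ℝ) := Real.sq_sqrt (by positivity)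
  have e2 : Real.sqrt ((n:ℝ) + 1) ^ 2 = (n:ℝ) + 1 := Real.sq_sqrt (by positivity)
  have hst : Real.sqrt (n:ℝ) ≤ Real.sqrt ((n:ℝ)+1) := Real.sqrt_le_sqrt (by linarith)
  have h2 : 1 / Real.sqrt (n:ℝ) - 1 / Real.sqrt ((n:ℝ)+1) =
      (Real.sqrt ((n:ℝ)+1) - Real.sqrt (n:ℝ)) / (Real.sqrt (n:ℝ) * Real.sqrt ((n:ℝ)+1)) := by
    field_simp
  rw [h2, ← mul_div_assoc, div_le_div_iff₀ (by positivity) (by positivity)]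
  nlinarith [mul_pos hs ht, sq_nonneg (Real.sqrt ((n:ℝ)+1) - Real.sqrt (n:ℝ)),
    mul_pos (mul_pos hs ht) ht, mul_pos ht ht]

private lemma tail_sum_le (m N : ℕ) :
    ∑ n ∈ Finset.Ico (m + 1) N, 1 / (Real.sqrt (n + 1) * (n + 1)) ≤ 2 / Real.sqrt (m + 1) := by
  rcases le_or_gt N (m + 1) with h | h
  · rw [Finset.Ico_eq_empty (by omega)]
    simp
    positivity
  · have step : ∀ n ∈ Finset.Ico (m+1) N, 1 / (Real.sqrt (n + 1) * (n + 1)) ≤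
        2 * (1 / Real.sqrt n - 1 / Real.sqrt (n + 1)) := by
      intro n hn
      exact term_telescope n (by simp [Finset.mem_Ico] at hn; omega)
    calc ∑ n ∈ Finset.Ico (m + 1) N, 1 / (Real.sqrt (n + 1) * (n + 1))
        ≤ ∑ n ∈ Finset.Ico (m+1) N, 2 * (1 / Real.sqrt n - 1 / Real.sqrt (n + 1)) :=
          Finset.sum_le_sum step
      _ = 2 * ∑ n ∈ Finset.Ico (m+1) N, (1 / Real.sqrt n - 1 / Real.sqrt (n + 1)) := by
          rw [Finset.mul_sum]
      _ ≤ 2 / Real.sqrt (m + 1) := by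
          have tel : ∑ n ∈ Finset.Ico (m+1) N, (1 / Real.sqrt n - 1 / Real.sqrt (n + 1)) =
              1 / Real.sqrt ((m:ℝ)+1) - 1 / Real.sqrt (N:ℝ) := by
            rw [Finset.sum_Ico_eq_sub _ (le_of_lt h)]
            simp only [show ∀ k:ℕ, ((k:ℝ)+1) = ((k+1:ℕ):ℝ) from fun k => by push_cast; ring]
            rw [Finset.sum_range_sub' (fun i => 1 / Real.sqrt (i:ℝ)),
              Finset.sum_range_sub' (fun i => 1 / Real.sqrt (i:ℝ))]
            push_cast
            ring
          have hN : 0 ≤ 1 / Real.sqrt (N:ℝ) := by positivity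
          have hm : 0 < Real.sqrt ((m:ℝ)+1) := Real.sqrt_pos.2 (by positivity)
          have : ∑ n ∈ Finset.Ico (m+1) N, (1 / Real.sqrt n - 1 / Real.sqrt (n + 1)) ≤
              1 / Real.sqrt ((m:ℝ)+1) := by rw [tel]; linarith
          calc 2 * ∑ n ∈ Finset.Ico (m+1) N, (1 / Real.sqrt n - 1 / Real.sqrt (n + 1))
              ≤ 2 * (1 / Real.sqrt ((m:ℝ)+1)) := by linarith
            _ = 2 / Real.sqrt ((m:ℝ)+1) := by ring


private lemma kernel_bound (m N : ℕ) :
    ∑ n ∈ Finset.range N, Real.sqrt (m + 1) / (Real.sqrt (n + 1) * ((m:ℝ) + n + 2)) ≤ 4 := by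
  set g : ℕ → ℝ := fun n => Real.sqrt (m + 1) / (Real.sqrt (n + 1) * ((m:ℝ) + n + 2)) with hgdef
  have hg0 : ∀ n, 0 ≤ g n := fun n => by positivity
  have hm : (0:ℝ) < Real.sqrt ((m:ℝ) + 1) := Real.sqrt_pos.2 (by positivity)
  have hms : Real.sqrt ((m:ℝ)+1) * Real.sqrt ((m:ℝ)+1) = (m:ℝ)+1 :=
    Real.mul_self_sqrt (by positivity)
  set M := max N (m + 1) with hM
  have hsub : ∑ n ∈ Finset.range N, g n ≤ ∑ n ∈ Finset.range M, g n :=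
    Finset.sum_le_sum_of_subset_of_nonneg
      (Finset.range_subset_range.2 (le_max_left _ _)) (fun n _ _ => hg0 n)
  have hsplit : ∑ n ∈ Finset.range M, g n =
      ∑ n ∈ Finset.range (m+1), g n + ∑ n ∈ Finset.Ico (m+1) M, g n := by
    rw [Finset.range_eq_Ico, ← Finset.sum_Ico_consecutive _ (Nat.zero_le (m+1))
      (le_max_right _ _)]
    rw [Finset.range_eq_Ico]
  have part1 : ∑ n ∈ Finset.range (m+1), g n ≤ 2 := by
    have hterm : ∀ n ∈ Finset.range (m+1), g n ≤
        (1 / Real.sqrt ((m:ℝ)+1)) * (1 / Real.sqrt ((n:ℝ)+1)) := by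
      intro n _
      have h1 : (0:ℝ) < Real.sqrt ((n:ℝ)+1) := Real.sqrt_pos.2 (by positivity)
      have h2 : ((m:ℝ) + 1) ≤ (m:ℝ) + n + 2 := by
        have : (0:ℝ) ≤ n := Nat.cast_nonneg n
        linarith
      have step1 : g n ≤ Real.sqrt ((m:ℝ)+1) / (Real.sqrt ((n:ℝ)+1) * ((m:ℝ)+1)) := by
        apply div_le_div_of_nonneg_left hm.le (by positivity)
        exact mul_le_mul_of_nonneg_left h2 h1.le
      refine step1.trans (le_of_eq ?_)
      field_simp
      rw [sq, hms]
    calc ∑ n ∈ Finset.range (m+1), g n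
        ≤ ∑ n ∈ Finset.range (m+1), (1 / Real.sqrt ((m:ℝ)+1)) * (1 / Real.sqrt ((n:ℝ)+1)) :=
          Finset.sum_le_sum hterm
      _ = (1 / Real.sqrt ((m:ℝ)+1)) * ∑ n ∈ Finset.range (m+1), 1 / Real.sqrt ((n:ℝ)+1) := by
          rw [Finset.mul_sum]
      _ ≤ (1 / Real.sqrt ((m:ℝ)+1)) * (2 * Real.sqrt ((m+1 : ℕ):ℝ)) := by
          apply mul_le_mul_of_nonneg_left (inv_sqrt_sum_le (m+1)) (by positivity)
      _ = 2 := by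
          push_cast
          field_simp
  have part2 : ∑ n ∈ Finset.Ico (m+1) M, g n ≤ 2 := by
    have hterm : ∀ n ∈ Finset.Ico (m+1) M, g n ≤
        Real.sqrt ((m:ℝ)+1) * (1 / (Real.sqrt ((n:ℝ)+1) * ((n:ℝ)+1))) := by
      intro n hn
      have h1 : (0:ℝ) < Real.sqrt ((n:ℝ)+1) := Real.sqrt_pos.2 (by positivity)
      have h2 : ((n:ℝ) + 1) ≤ (m:ℝ) + n + 2 := by
        have : (0:ℝ) ≤ m := Nat.cast_nonneg m
        linarith
      have step1 : g n ≤ Real.sqrt ((m:ℝ)+1) / (Real.sqrt ((n:ℝ)+1) * ((n:ℝ)+1)) := by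
        apply div_le_div_of_nonneg_left hm.le (by positivity)
        exact mul_le_mul_of_nonneg_left h2 h1.le
      refine step1.trans (le_of_eq ?_)
      ring
    calc ∑ n ∈ Finset.Ico (m+1) M, g n
        ≤ ∑ n ∈ Finset.Ico (m+1) M, Real.sqrt ((m:ℝ)+1) * (1 / (Real.sqrt ((n:ℝ)+1) * ((n:ℝ)+1))) :=
          Finset.sum_le_sum hterm
      _ = Real.sqrt ((m:ℝ)+1) * ∑ n ∈ Finset.Ico (m+1) M, 1 / (Real.sqrt ((n:ℝ)+1) * ((n:ℝ)+1)) := by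
          rw [Finset.mul_sum]
      _ ≤ Real.sqrt ((m:ℝ)+1) * (2 / Real.sqrt ((m:ℝ)+1)) := by
          apply mul_le_mul_of_nonneg_left (tail_sum_le m M) hm.le
      _ = 2 := by field_simp
  linarith

set_option maxHeartbeats 2000000 in
/-- Hilbert's double series theorem, boundedness form: there is a finite constant C
bounding the double series for every square-summable complex sequence. Here `x n`
denotes x_{n+1}, so the sums run over the positive integers. -/
theorem hilbert_inequality_bounded :
    ∃ C : ℝ, ∀ x : ℕ → ℂ, Summable (fun n => ‖x n‖ ^ 2) →
      ‖∑' m : ℕ, ∑' n : ℕ, x m * x n / ((m : ℂ) + 1 + ((n : ℂ) + 1))‖ ≤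
        C * ∑' n : ℕ, ‖x n‖ ^ 2 := by
  refine ⟨4, fun x hx => ?_⟩
  have hA0 : 0 ≤ ∑' n, ‖x n‖ ^ 2 := tsum_nonneg fun n => by positivity
  set A := ∑' n, ‖x n‖ ^ 2 with hA
  set g : ℕ → ℕ → ℝ := fun m n => Real.sqrt (m + 1) / (Real.sqrt (n + 1) * ((m:ℝ) + n + 2))
    with hgdef
  have hg0 : ∀ m n, 0 ≤ g m n := fun m n => by rw [hgdef]; positivity
  have hgs : ∀ m, Summable (g m) := fun m =>
    summable_of_sum_range_le (fun n => hg0 m n) (kernel_bound m)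
  have hgt : ∀ m, ∑' n, g m n ≤ 4 := fun m =>
    Real.tsum_le_of_sum_range_le (fun n => hg0 m n) (kernel_bound m)
  set U : ℕ × ℕ → ℝ := fun p => ‖x p.1‖ ^ 2 * g p.1 p.2 with hUdef
  have hU0 : ∀ p, 0 ≤ U p := fun p => mul_nonneg (by positivity) (hg0 _ _)
  have hfibU : ∀ m, Summable fun n => U (m, n) := fun m =>
    show Summable fun n => ‖x m‖ ^ 2 * g m n from (hgs m).mul_left _
  have hmid : Summable fun m => ‖x m‖ ^ 2 * ∑' n, g m n := by
    apply Summable.of_nonneg_of_le (fun m => ?_) (fun m => ?_) (hx.mul_left 4)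
    · exact mul_nonneg (by positivity) (tsum_nonneg fun n => hg0 m n)
    · calc ‖x m‖ ^ 2 * ∑' n, g m n ≤ ‖x m‖ ^ 2 * 4 :=
            mul_le_mul_of_nonneg_left (hgt m) (by positivity)
        _ = 4 * ‖x m‖ ^ 2 := by ring
  have hUs : Summable U := by
    rw [summable_prod_of_nonneg (fun p => hU0 p)]
    refine ⟨hfibU, ?_⟩
    have he : ∀ m, (∑' n, U (m, n)) = ‖x m‖ ^ 2 * ∑' n, g m n := fun m =>
      tsum_mul_left (a := ‖x m‖ ^ 2) (f := g m)
    simpa only [he] using hmid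
  have hUt : ∑' p, U p ≤ 4 * A := by
    rw [Summable.tsum_prod' hUs hfibU]
    calc ∑' m, ∑' n, U (m, n) = ∑' m, ‖x m‖ ^ 2 * ∑' n, g m n :=
          tsum_congr fun m => tsum_mul_left (a := ‖x m‖ ^ 2) (f := g m)
      _ ≤ ∑' m, 4 * ‖x m‖ ^ 2 := by
          apply Summable.tsum_le_tsum _ hmid (hx.mul_left 4)
          intro m
          calc ‖x m‖ ^ 2 * ∑' n, g m n ≤ ‖x m‖ ^ 2 * 4 :=
                mul_le_mul_of_nonneg_left (hgt m) (by positivity)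
            _ = 4 * ‖x m‖ ^ 2 := by ring
      _ = 4 * A := tsum_mul_left
  set V : ℕ × ℕ → ℝ := fun p => ‖x p.2‖ ^ 2 * g p.2 p.1 with hVdef
  have hV0 : ∀ p, 0 ≤ V p := fun p => mul_nonneg (by positivity) (hg0 _ _)
  have hVs : Summable V := hUs.prod_symm
  have hVt : ∑' p, V p ≤ 4 * A := by
    have : ∑' p : ℕ × ℕ, V p = ∑' p : ℕ × ℕ, U p := (Equiv.prodComm ℕ ℕ).tsum_eq U
    rw [this]; exact hUt
  set t : ℕ × ℕ → ℝ := fun p => ‖x p.1‖ * ‖x p.2‖ / ((p.1:ℝ) + p.2 + 2) with htdef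
  have ht0 : ∀ p, 0 ≤ t p := fun p => by rw [htdef]; positivity
  have key : ∀ s : Finset (ℕ × ℕ), ∑ p ∈ s, t p ≤ 4 * A := by
    intro s
    have cs := Finset.sum_mul_sq_le_sq_mul_sq s
      (fun p => ‖x p.1‖ * Real.sqrt (g p.1 p.2)) (fun p => ‖x p.2‖ * Real.sqrt (g p.2 p.1))
    have hid : ∀ p : ℕ × ℕ,
        (‖x p.1‖ * Real.sqrt (g p.1 p.2)) * (‖x p.2‖ * Real.sqrt (g p.2 p.1)) = t p := by
      rintro ⟨m, n⟩
      have hc : (0:ℝ) < (m:ℝ) + n + 2 := by positivity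
      have h1 : Real.sqrt ((m:ℝ) + 1) ≠ 0 := ne_of_gt (Real.sqrt_pos.2 (by positivity))
      have h2 : Real.sqrt ((n:ℝ) + 1) ≠ 0 := ne_of_gt (Real.sqrt_pos.2 (by positivity))
      have hprod : g m n * g n m = (1 / ((m:ℝ) + n + 2)) ^ 2 := by
        rw [hgdef]
        field_simp
        ring
      have hs : Real.sqrt (g m n) * Real.sqrt (g n m) = 1 / ((m:ℝ) + n + 2) := by
        rw [← Real.sqrt_mul (hg0 m n), hprod, Real.sqrt_sq (by positivity)]
      calc (‖x m‖ * Real.sqrt (g m n)) * (‖x n‖ * Real.sqrt (g n m))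
          = ‖x m‖ * ‖x n‖ * (Real.sqrt (g m n) * Real.sqrt (g n m)) := by ring
        _ = ‖x m‖ * ‖x n‖ * (1 / ((m:ℝ) + n + 2)) := by rw [hs]
        _ = t (m, n) := by rw [htdef]; ring
    have hsqU : ∀ p : ℕ × ℕ, (‖x p.1‖ * Real.sqrt (g p.1 p.2)) ^ 2 = U p := by
      intro p
      rw [mul_pow, Real.sq_sqrt (hg0 p.1 p.2), hUdef]
    have hsqV : ∀ p : ℕ × ℕ, (‖x p.2‖ * Real.sqrt (g p.2 p.1)) ^ 2 = V p := by
      intro p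
      rw [mul_pow, Real.sq_sqrt (hg0 p.2 p.1), hVdef]
    have hsumU : ∑ p ∈ s, (‖x p.1‖ * Real.sqrt (g p.1 p.2)) ^ 2 ≤ 4 * A := by
      calc ∑ p ∈ s, (‖x p.1‖ * Real.sqrt (g p.1 p.2)) ^ 2 = ∑ p ∈ s, U p :=
            Finset.sum_congr rfl fun p _ => hsqU p
        _ ≤ ∑' p, U p := Summable.sum_le_tsum s (fun p _ => hU0 p) hUs
        _ ≤ 4 * A := hUt
    have hsumV : ∑ p ∈ s, (‖x p.2‖ * Real.sqrt (g p.2 p.1)) ^ 2 ≤ 4 * A := by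
      calc ∑ p ∈ s, (‖x p.2‖ * Real.sqrt (g p.2 p.1)) ^ 2 = ∑ p ∈ s, V p :=
            Finset.sum_congr rfl fun p _ => hsqV p
        _ ≤ ∑' p, V p := Summable.sum_le_tsum s (fun p _ => hV0 p) hVs
        _ ≤ 4 * A := hVt
    have csum : ∑ p ∈ s, t p =
        ∑ p ∈ s, (‖x p.1‖ * Real.sqrt (g p.1 p.2)) * (‖x p.2‖ * Real.sqrt (g p.2 p.1)) :=
      Finset.sum_congr rfl fun p _ => (hid p).symm
    have hVnonneg : 0 ≤ ∑ p ∈ s, (‖x p.2‖ * Real.sqrt (g p.2 p.1)) ^ 2 :=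
      Finset.sum_nonneg fun p _ => sq_nonneg _
    have hsq : (∑ p ∈ s, t p) ^ 2 ≤ (4 * A) * (4 * A) := by
      rw [csum]
      exact le_trans cs (mul_le_mul hsumU hsumV hVnonneg (by linarith))
    have hts : 0 ≤ ∑ p ∈ s, t p := Finset.sum_nonneg fun p _ => ht0 p
    nlinarith [hsq, hts, hA0]
  have htsum : Summable t := summable_of_sum_le ht0 key
  have htt : ∑' p, t p ≤ 4 * A := Summable.tsum_le_of_sum_le htsum key
  set F : ℕ × ℕ → ℂ := fun p => x p.1 * x p.2 / ((p.1 : ℂ) + 1 + ((p.2 : ℂ) + 1)) with hFdef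
  have hnorm : ∀ p, ‖F p‖ = t p := by
    rintro ⟨m, n⟩
    have hcast : ((m:ℂ) + 1 + ((n:ℂ) + 1)) = ((((m:ℝ) + n + 2) : ℝ) : ℂ) := by
      push_cast; ring
    show ‖x m * x n / ((m:ℂ) + 1 + ((n:ℂ) + 1))‖ = t (m, n)
    rw [hcast, norm_div, norm_mul, Complex.norm_real,
      Real.norm_of_nonneg (by positivity), htdef]
  have hnormsum : Summable fun p => ‖F p‖ := by
    simpa only [hnorm] using htsum
  have hFs : Summable F := Summable.of_norm hnormsum
  have hfib : ∀ m, Summable fun n => F (m, n) := fun m => hFs.prod_factor m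
  have heq : (∑' m : ℕ, ∑' n : ℕ, x m * x n / ((m : ℂ) + 1 + ((n : ℂ) + 1))) = ∑' p, F p :=
    (Summable.tsum_prod' hFs hfib).symm
  calc ‖∑' m : ℕ, ∑' n : ℕ, x m * x n / ((m : ℂ) + 1 + ((n : ℂ) + 1))‖
      = ‖∑' p, F p‖ := by rw [heq]
    _ ≤ ∑' p, ‖F p‖ := norm_tsum_le_tsum_norm hnormsum
    _ = ∑' p, t p := tsum_congr hnorm
    _ ≤ 4 * A := htt
end

section
/- The constant π in Hilbert's inequality is sharp: for every C < π there exists a square-summable sequence of nonnegative reals (x_n) with ∑_{m,n} x_m x_n/(m+n) > C ∑_n x_n². -/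
open Real Finset

lemma arctan_le_self' {x : ℝ} (hx : 0 ≤ x) : Real.arctan x ≤ x := by
  have h0 : 0 ≤ Real.arctan x := by
    simpa using Real.arctan_strictMono.monotone hx
  calc Real.arctan x ≤ Real.tan (Real.arctan x) :=
        Real.le_tan h0 (Real.arctan_lt_pi_div_two x)
    _ = x := Real.tan_arctan x

lemma harm_lb (M : ℕ) : Real.log ((M:ℝ)+1) ≤ ∑ m ∈ range M, (1:ℝ)/(m+1) := by
  induction M with
  | zero => simp
  | succ M ih =>
    rw [Finset.sum_range_succ]
    have h1 : Real.log (((M:ℝ)+1+1)/((M:ℝ)+1)) ≤ ((M:ℝ)+1+1)/((M:ℝ)+1) - 1 :=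
      Real.log_le_sub_one_of_pos (by positivity)
    have h2 : ((M:ℝ)+1+1)/((M:ℝ)+1) - 1 = 1/((M:ℝ)+1) := by field_simp; ring
    rw [Real.log_div (by positivity) (by positivity)] at h1
    push_cast
    linarith

lemma harm_ub (N : ℕ) : ∑ m ∈ range N, (1:ℝ)/(m+1) ≤ 1 + Real.log N := by
  induction N with
  | zero => simp
  | succ N ih =>
    rcases Nat.eq_zero_or_pos N with rfl | hN
    · simp
    rw [Finset.sum_range_succ]
    have h1 : Real.log (((N:ℝ))/((N:ℝ)+1)) ≤ ((N:ℝ))/((N:ℝ)+1) - 1 :=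
      Real.log_le_sub_one_of_pos (by positivity)
    have h2 : ((N:ℝ))/((N:ℝ)+1) - 1 = -(1/((N:ℝ)+1)) := by field_simp; ring
    have hN' : (0:ℝ) < N := by exact_mod_cast hN
    rw [Real.log_div (by positivity) (by positivity)] at h1
    push_cast
    linarith

lemma sum32_aux : ∀ N : ℕ, 1 ≤ N →
    ∑ m ∈ range N, 1/(((m:ℝ)+1) * Real.sqrt ((m:ℝ)+1)) ≤ 3 - 2/Real.sqrt N := by
  intro N
  induction N with
  | zero => intro h; omega
  | succ N ih =>
    intro _
    rcases Nat.eq_zero_or_pos N with rfl | hN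
    · norm_num [Real.sqrt_one]
    rw [Finset.sum_range_succ]
    have key : 1/(((N:ℝ)+1) * Real.sqrt ((N:ℝ)+1)) ≤
        2/Real.sqrt N - 2/Real.sqrt ((N:ℝ)+1) := by
      set s := Real.sqrt (N:ℝ) with hs
      set t := Real.sqrt ((N:ℝ)+1) with ht
      have hN' : (1:ℝ) ≤ N := by exact_mod_cast hN
      have hs0 : 0 < s := Real.sqrt_pos.mpr (by linarith)
      have ht0 : 0 < t := Real.sqrt_pos.mpr (by linarith)
      have hst : s ≤ t := Real.sqrt_le_sqrt (by linarith)
      have hs2 : s^2 = N := Real.sq_sqrt (by linarith)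
      have ht2 : t^2 = (N:ℝ)+1 := Real.sq_sqrt (by linarith)
      rw [div_sub_div _ _ (ne_of_gt hs0) (ne_of_gt ht0), ← ht2,
        div_le_div_iff₀ (by nlinarith) (by positivity)]
      nlinarith [sq_nonneg (t - s), sq_nonneg t, mul_pos hs0 ht0]
    have := ih hN
    push_cast
    push_cast at key
    linarith

lemma sum32 (N : ℕ) : ∑ m ∈ range N, 1/(((m:ℝ)+1) * Real.sqrt ((m:ℝ)+1)) ≤ 3 := by
  rcases Nat.eq_zero_or_pos N with rfl | hN
  · simp
  have := sum32_aux N hN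
  have h2 : 0 ≤ 2/Real.sqrt N := by positivity
  linarith

lemma hasDerivAt_F {a v : ℝ} (ha : 0 < a) (hv : 0 < v) :
    HasDerivAt (fun w => (2/Real.sqrt a) * Real.arctan (Real.sqrt w / Real.sqrt a))
      (1/(Real.sqrt v * (a + v))) v := by
  have ha' : 0 < Real.sqrt a := Real.sqrt_pos.mpr ha
  have hv' : 0 < Real.sqrt v := Real.sqrt_pos.mpr hv
  have h1 : HasDerivAt (fun w => Real.sqrt w / Real.sqrt a)
      (1/(2*Real.sqrt v) / Real.sqrt a) v :=
    (Real.hasDerivAt_sqrt (ne_of_gt hv)).div_const _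
  have h2 := (h1.arctan).const_mul (2/Real.sqrt a)
  convert h2 using 1
  · rfl
  · rfl
  have hsa : Real.sqrt a ^ 2 = a := Real.sq_sqrt ha.le
  have hsv : Real.sqrt v ^ 2 = v := Real.sq_sqrt hv.le
  rw [div_pow, hsa, hsv]
  field_simp
  ring_nf
  linear_combination hsa

lemma step_ineq {a : ℝ} (ha : 1 ≤ a) (n : ℕ) :
    (2/Real.sqrt a) * Real.arctan (Real.sqrt ((n:ℝ)+2) / Real.sqrt a)
      - (2/Real.sqrt a) * Real.arctan (Real.sqrt ((n:ℝ)+1) / Real.sqrt a)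
      ≤ 1/(Real.sqrt ((n:ℝ)+1) * (a + ((n:ℝ)+1))) := by
  have ha0 : (0:ℝ) < a := by linarith
  set F := fun w => (2/Real.sqrt a) * Real.arctan (Real.sqrt w / Real.sqrt a) with hF
  obtain ⟨ξ, hξ, hslope⟩ := exists_hasDerivAt_eq_slope F
    (fun v => 1/(Real.sqrt v * (a + v)))
    (show ((n:ℝ)+1) < (n:ℝ)+2 by linarith)
    (by
      intro x hx
      have hx0 : (0:ℝ) < x := lt_of_lt_of_le (by positivity) hx.1
      exact (hasDerivAt_F ha0 hx0).continuousAt.continuousWithinAt)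
    (by
      intro x hx
      have hx0 : (0:ℝ) < x := lt_trans (by positivity) hx.1
      exact hasDerivAt_F ha0 hx0)
  have hξ1 : (n:ℝ)+1 < ξ := hξ.1
  have hξ0 : (0:ℝ) < ξ := lt_trans (by positivity) hξ1
  have hmono : 1/(Real.sqrt ξ * (a + ξ)) ≤ 1/(Real.sqrt ((n:ℝ)+1) * (a + ((n:ℝ)+1))) := by
    apply one_div_le_one_div_of_le (by positivity)
    have h1 : Real.sqrt ((n:ℝ)+1) ≤ Real.sqrt ξ := Real.sqrt_le_sqrt hξ1.le
    have h2 : a + ((n:ℝ)+1) ≤ a + ξ := by linarith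
    have h3 : (0:ℝ) < Real.sqrt ((n:ℝ)+1) := by positivity
    nlinarith
  have hne : ((n:ℝ)+2) - ((n:ℝ)+1) = 1 := by ring
  rw [hne, div_one] at hslope
  calc F ((n:ℝ)+2) - F ((n:ℝ)+1) = 1/(Real.sqrt ξ * (a + ξ)) := hslope.symm
    _ ≤ _ := hmono

lemma inner_lb {a : ℝ} (ha : 1 ≤ a) (N : ℕ) :
    (2/Real.sqrt a) * (Real.arctan (Real.sqrt ((N:ℝ)+1)/Real.sqrt a)
        - Real.arctan (1/Real.sqrt a))
      ≤ ∑ n ∈ range N, 1/(Real.sqrt ((n:ℝ)+1) * (a + ((n:ℝ)+1))) := by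
  have key := Finset.sum_range_sub
    (f := fun k => (2/Real.sqrt a) * Real.arctan (Real.sqrt ((k:ℝ)+1) / Real.sqrt a)) N
  have hterm : ∀ n ∈ range N,
      (2/Real.sqrt a) * Real.arctan (Real.sqrt (((n+1:ℕ):ℝ)+1) / Real.sqrt a)
        - (2/Real.sqrt a) * Real.arctan (Real.sqrt ((n:ℝ)+1) / Real.sqrt a)
      ≤ 1/(Real.sqrt ((n:ℝ)+1) * (a + ((n:ℝ)+1))) := by
    intro n _
    have := step_ineq ha n
    push_cast
    convert this using 4 <;> push_cast <;> ring
  calc (2/Real.sqrt a) * (Real.arctan (Real.sqrt ((N:ℝ)+1)/Real.sqrt a)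
        - Real.arctan (1/Real.sqrt a))
      = ∑ n ∈ range N, ((2/Real.sqrt a) * Real.arctan (Real.sqrt (((n+1:ℕ):ℝ)+1) / Real.sqrt a)
        - (2/Real.sqrt a) * Real.arctan (Real.sqrt ((n:ℝ)+1) / Real.sqrt a)) := by
        rw [key]
        norm_num
        ring
    _ ≤ _ := Finset.sum_le_sum hterm


lemma arctan_nonneg' {x : ℝ} (hx : 0 ≤ x) : 0 ≤ Real.arctan x := by
  simpa using Real.arctan_strictMono.monotone hx

set_option maxHeartbeats 1000000 in
lemma main_pos (C : ℝ) (hC0 : 0 ≤ C) (hC : C < Real.pi) :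
    ∃ N : ℕ, C * ∑ n ∈ range N, (1:ℝ)/((n:ℝ)+1) <
      ∑ m ∈ range N, ∑ n ∈ range N,
        (1/Real.sqrt ((m:ℝ)+1)) * (1/Real.sqrt ((n:ℝ)+1)) / ((m:ℝ)+1+((n:ℝ)+1)) := by
  have hπ := Real.pi_pos
  -- choose K with C < 2 arctan √K
  obtain ⟨K, hK1, hθC⟩ : ∃ K : ℕ, 1 ≤ K ∧ C < 2 * Real.arctan (Real.sqrt K) := by
    set φ := (C/2 + Real.pi/2)/2 with hφdef
    have hφ0 : 0 ≤ φ := by positivity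
    have hφlt : φ < Real.pi/2 := by rw [hφdef]; linarith
    set t := Real.tan φ with htdef
    have ht0 : 0 ≤ t := Real.tan_nonneg_of_nonneg_of_le_pi_div_two hφ0 hφlt.le
    have harctan_t : Real.arctan t = φ := Real.arctan_tan (by linarith) hφlt
    refine ⟨⌈t^2⌉₊ + 1, le_add_self, ?_⟩
    have hKt : t ≤ Real.sqrt ((⌈t^2⌉₊:ℝ) + 1) := by
      have h1 : t^2 ≤ (⌈t^2⌉₊:ℝ) + 1 := by have := Nat.le_ceil (t^2); linarith
      nlinarith [Real.sq_sqrt (show (0:ℝ) ≤ (⌈t^2⌉₊:ℝ) + 1 by positivity),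
        Real.sqrt_nonneg ((⌈t^2⌉₊:ℝ) + 1)]
    have h1 : Real.arctan t ≤ Real.arctan (Real.sqrt ((⌈t^2⌉₊:ℝ) + 1)) :=
      Real.arctan_strictMono.monotone hKt
    rw [harctan_t] at h1
    have hcast : ((⌈t^2⌉₊ + 1 : ℕ):ℝ) = (⌈t^2⌉₊:ℝ) + 1 := by push_cast; ring
    rw [hcast]
    rw [hφdef] at h1
    linarith
  set θ := 2 * Real.arctan (Real.sqrt K) with hθdef
  have hK0 : (0:ℝ) < K := by exact_mod_cast hK1
  have hθ0 : 0 ≤ θ := by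
    have := arctan_nonneg' (Real.sqrt_nonneg (K:ℝ))
    rw [hθdef]; linarith
  have hlogK : 0 ≤ Real.log K := Real.log_nonneg (by exact_mod_cast hK1)
  -- choose N
  set R := (C + 7 + θ * Real.log K)/(θ - C) with hRdef
  obtain ⟨N, hN1, hlogN⟩ : ∃ N : ℕ, 1 ≤ N ∧ R < Real.log N := by
    refine ⟨⌈Real.exp R⌉₊ + 1, le_add_self, ?_⟩
    have h1 : Real.exp R < ((⌈Real.exp R⌉₊ + 1 : ℕ):ℝ) := by
      have := Nat.le_ceil (Real.exp R)
      push_cast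
      linarith
    calc R = Real.log (Real.exp R) := (Real.log_exp R).symm
      _ < _ := Real.log_lt_log (Real.exp_pos R) h1
  have hN0 : (0:ℝ) < N := by exact_mod_cast hN1
  have hkey : C + 7 + θ * Real.log K < (θ - C) * Real.log N := by
    have h2 : (θ - C) * R < (θ - C) * Real.log N :=
      mul_lt_mul_of_pos_left hlogN (by linarith)
    rw [hRdef, mul_div_cancel₀ _ (by linarith : θ - C ≠ 0)] at h2
    exact h2
  refine ⟨N, ?_⟩
  set M := N / K with hMdef
  have hMN : M ≤ N := Nat.div_le_self _ _
  -- step 1 : inner bound per m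
  have key1 : ∀ m ∈ range N,
      (2/((m:ℝ)+1)) * (Real.arctan (Real.sqrt ((N:ℝ)+1)/Real.sqrt ((m:ℝ)+1))
        - Real.arctan (1/Real.sqrt ((m:ℝ)+1)))
      ≤ ∑ n ∈ range N,
          (1/Real.sqrt ((m:ℝ)+1)) * (1/Real.sqrt ((n:ℝ)+1)) / ((m:ℝ)+1+((n:ℝ)+1)) := by
    intro m _
    have hm0 : (0:ℝ) ≤ m := Nat.cast_nonneg m
    have ha : (1:ℝ) ≤ (m:ℝ)+1 := by linarith
    have h := inner_lb ha N
    have hpos : (0:ℝ) ≤ 1/Real.sqrt ((m:ℝ)+1) := by positivity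
    have h2 := mul_le_mul_of_nonneg_left h hpos
    have hsp : (0:ℝ) < Real.sqrt ((m:ℝ)+1) := Real.sqrt_pos.mpr (by linarith)
    have hsa : Real.sqrt ((m:ℝ)+1) * Real.sqrt ((m:ℝ)+1) = (m:ℝ)+1 :=
      Real.mul_self_sqrt (by linarith)
    calc (2/((m:ℝ)+1)) * (Real.arctan (Real.sqrt ((N:ℝ)+1)/Real.sqrt ((m:ℝ)+1))
          - Real.arctan (1/Real.sqrt ((m:ℝ)+1)))
        = 1/Real.sqrt ((m:ℝ)+1) * ((2/Real.sqrt ((m:ℝ)+1)) *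
            (Real.arctan (Real.sqrt ((N:ℝ)+1)/Real.sqrt ((m:ℝ)+1))
              - Real.arctan (1/Real.sqrt ((m:ℝ)+1)))) := by
          rw [show (1:ℝ)/Real.sqrt ((m:ℝ)+1) * ((2/Real.sqrt ((m:ℝ)+1)) *
            (Real.arctan (Real.sqrt ((N:ℝ)+1)/Real.sqrt ((m:ℝ)+1))
              - Real.arctan (1/Real.sqrt ((m:ℝ)+1))))
            = (2/(Real.sqrt ((m:ℝ)+1) * Real.sqrt ((m:ℝ)+1))) *
            (Real.arctan (Real.sqrt ((N:ℝ)+1)/Real.sqrt ((m:ℝ)+1))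
              - Real.arctan (1/Real.sqrt ((m:ℝ)+1))) from by ring, hsa]
      _ ≤ 1/Real.sqrt ((m:ℝ)+1) *
            ∑ n ∈ range N, 1/(Real.sqrt ((n:ℝ)+1) * (((m:ℝ)+1) + ((n:ℝ)+1))) := h2
      _ = ∑ n ∈ range N,
            (1/Real.sqrt ((m:ℝ)+1)) * (1/Real.sqrt ((n:ℝ)+1)) / ((m:ℝ)+1+((n:ℝ)+1)) := by
          rw [Finset.mul_sum]
          refine Finset.sum_congr rfl fun n _ => ?_
          have hn0 : (0:ℝ) ≤ n := Nat.cast_nonneg n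
          have hsn : (0:ℝ) < Real.sqrt ((n:ℝ)+1) := Real.sqrt_pos.mpr (by linarith)
          have hd : ((m:ℝ)+1+((n:ℝ)+1)) ≠ 0 := by positivity
          field_simp
  -- step 2: sum over m
  have key2 : (∑ m ∈ range N, (2/((m:ℝ)+1)) *
        Real.arctan (Real.sqrt ((N:ℝ)+1)/Real.sqrt ((m:ℝ)+1)))
      - (∑ m ∈ range N, (2/((m:ℝ)+1)) * Real.arctan (1/Real.sqrt ((m:ℝ)+1)))
      ≤ ∑ m ∈ range N, ∑ n ∈ range N,
          (1/Real.sqrt ((m:ℝ)+1)) * (1/Real.sqrt ((n:ℝ)+1)) / ((m:ℝ)+1+((n:ℝ)+1)) := by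
    rw [← Finset.sum_sub_distrib]
    apply Finset.sum_le_sum
    intro m hm
    have := key1 m hm
    linarith [this]
  -- bound B
  have hB : ∑ m ∈ range N, (2/((m:ℝ)+1)) * Real.arctan (1/Real.sqrt ((m:ℝ)+1)) ≤ 6 := by
    have h1 : ∀ m ∈ range N, (2/((m:ℝ)+1)) * Real.arctan (1/Real.sqrt ((m:ℝ)+1))
        ≤ 2 * (1/(((m:ℝ)+1) * Real.sqrt ((m:ℝ)+1))) := by
      intro m _
      have hm0 : (0:ℝ) ≤ m := Nat.cast_nonneg m
      have hs : (0:ℝ) < Real.sqrt ((m:ℝ)+1) := Real.sqrt_pos.mpr (by linarith)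
      have h2 : Real.arctan (1/Real.sqrt ((m:ℝ)+1)) ≤ 1/Real.sqrt ((m:ℝ)+1) :=
        arctan_le_self' (by positivity)
      have h3 : (0:ℝ) ≤ 2/((m:ℝ)+1) := by positivity
      calc (2/((m:ℝ)+1)) * Real.arctan (1/Real.sqrt ((m:ℝ)+1))
          ≤ (2/((m:ℝ)+1)) * (1/Real.sqrt ((m:ℝ)+1)) := mul_le_mul_of_nonneg_left h2 h3
        _ = 2 * (1/(((m:ℝ)+1) * Real.sqrt ((m:ℝ)+1))) := by
            field_simp
    calc ∑ m ∈ range N, (2/((m:ℝ)+1)) * Real.arctan (1/Real.sqrt ((m:ℝ)+1))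
        ≤ ∑ m ∈ range N, 2 * (1/(((m:ℝ)+1) * Real.sqrt ((m:ℝ)+1))) :=
          Finset.sum_le_sum h1
      _ = 2 * ∑ m ∈ range N, 1/(((m:ℝ)+1) * Real.sqrt ((m:ℝ)+1)) := by
          rw [Finset.mul_sum]
      _ ≤ 2 * 3 := by linarith [sum32 N]
      _ = 6 := by norm_num
  -- bound A
  have hA : θ * ∑ m ∈ range M, (1:ℝ)/((m:ℝ)+1)
      ≤ ∑ m ∈ range N, (2/((m:ℝ)+1)) *
        Real.arctan (Real.sqrt ((N:ℝ)+1)/Real.sqrt ((m:ℝ)+1)) := by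
    have h1 : θ * ∑ m ∈ range M, (1:ℝ)/((m:ℝ)+1)
        = ∑ m ∈ range M, (2/((m:ℝ)+1)) * Real.arctan (Real.sqrt K) := by
      rw [Finset.mul_sum]
      exact Finset.sum_congr rfl fun m _ => by rw [hθdef]; ring
    rw [h1]
    have h2 : ∀ m ∈ range M, (2/((m:ℝ)+1)) * Real.arctan (Real.sqrt K)
        ≤ (2/((m:ℝ)+1)) * Real.arctan (Real.sqrt ((N:ℝ)+1)/Real.sqrt ((m:ℝ)+1)) := by
      intro m hm
      have hm0 : (0:ℝ) ≤ m := Nat.cast_nonneg m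
      have hmM : m + 1 ≤ M := Finset.mem_range.mp hm
      have hnat : K * (m+1) ≤ N := by
        rw [hMdef] at hmM
        calc K * (m+1) = (m+1) * K := Nat.mul_comm _ _
          _ ≤ N := (Nat.le_div_iff_mul_le (by omega)).mp hmM
      have hreal : (K:ℝ) * ((m:ℝ)+1) ≤ (N:ℝ)+1 := by
        have h5 : ((K * (m+1) : ℕ):ℝ) ≤ (N:ℝ) := by exact_mod_cast hnat
        push_cast at h5
        linarith
      have hs : (0:ℝ) < Real.sqrt ((m:ℝ)+1) := Real.sqrt_pos.mpr (by linarith)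
      have harg : Real.sqrt K ≤ Real.sqrt ((N:ℝ)+1)/Real.sqrt ((m:ℝ)+1) := by
        rw [le_div_iff₀ hs]
        calc Real.sqrt (K:ℝ) * Real.sqrt ((m:ℝ)+1)
            = Real.sqrt ((K:ℝ) * ((m:ℝ)+1)) := (Real.sqrt_mul (by positivity) _).symm
          _ ≤ Real.sqrt ((N:ℝ)+1) := Real.sqrt_le_sqrt hreal
      have h4 := Real.arctan_strictMono.monotone harg
      have h3 : (0:ℝ) ≤ 2/((m:ℝ)+1) := by positivity
      exact mul_le_mul_of_nonneg_left h4 h3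
    calc ∑ m ∈ range M, (2/((m:ℝ)+1)) * Real.arctan (Real.sqrt K)
        ≤ ∑ m ∈ range M, (2/((m:ℝ)+1)) *
            Real.arctan (Real.sqrt ((N:ℝ)+1)/Real.sqrt ((m:ℝ)+1)) :=
          Finset.sum_le_sum h2
      _ ≤ _ := by
          apply Finset.sum_le_sum_of_subset_of_nonneg
          · exact Finset.range_subset_range.mpr hMN
          · intro m _ _
            have hm0 : (0:ℝ) ≤ m := Nat.cast_nonneg m
            have := arctan_nonneg' (show (0:ℝ) ≤ Real.sqrt ((N:ℝ)+1)/Real.sqrt ((m:ℝ)+1)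
              by positivity)
            positivity
  -- log bounds
  have hMlog : Real.log N - Real.log K ≤ Real.log ((M:ℝ)+1) := by
    have hnat : N < K * (M+1) := by
      have h6 : K * M + N % K = N := by rw [hMdef]; exact Nat.div_add_mod N K
      have hr : N % K < K := Nat.mod_lt _ (by omega)
      have h8 : K * (M + 1) = K * M + K := Nat.mul_succ K M
      omega
    have hreal : (N:ℝ)/K ≤ (M:ℝ)+1 := by
      rw [div_le_iff₀ hK0]
      have h7 : ((N:ℕ):ℝ) ≤ ((K * (M+1) : ℕ):ℝ) := by exact_mod_cast hnat.le
      push_cast at h7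
      linarith
    calc Real.log N - Real.log K = Real.log ((N:ℝ)/K) :=
        (Real.log_div (by positivity) (by positivity)).symm
      _ ≤ Real.log ((M:ℝ)+1) := Real.log_le_log (by positivity) hreal
  -- final assembly
  have hHM := harm_lb M
  have hHN := harm_ub N
  have hθM : θ * Real.log ((M:ℝ)+1) ≤ θ * ∑ m ∈ range M, (1:ℝ)/((m:ℝ)+1) :=
    mul_le_mul_of_nonneg_left hHM hθ0
  have hθM2 : θ * (Real.log N - Real.log K) ≤ θ * Real.log ((M:ℝ)+1) :=
    mul_le_mul_of_nonneg_left hMlog hθ0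
  have e1 : θ * (Real.log N - Real.log K) = θ * Real.log N - θ * Real.log K := by ring
  have e2 : C * (1 + Real.log N) = C + C * Real.log N := by ring
  have e3 : (θ - C) * Real.log N = θ * Real.log N - C * Real.log N := by ring
  have hfin : C * (1 + Real.log N) < θ * (Real.log N - Real.log K) - 6 := by
    rw [e1, e2]
    rw [e3] at hkey
    linarith
  calc C * ∑ n ∈ range N, (1:ℝ)/((n:ℝ)+1)
      ≤ C * (1 + Real.log N) := mul_le_mul_of_nonneg_left hHN hC0
    _ < θ * (Real.log N - Real.log K) - 6 := hfin
    _ ≤ θ * Real.log ((M:ℝ)+1) - 6 := by linarith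
    _ ≤ θ * (∑ m ∈ range M, (1:ℝ)/((m:ℝ)+1)) - 6 := by linarith
    _ ≤ (∑ m ∈ range N, (2/((m:ℝ)+1)) *
          Real.arctan (Real.sqrt ((N:ℝ)+1)/Real.sqrt ((m:ℝ)+1))) - 6 := by linarith
    _ ≤ (∑ m ∈ range N, (2/((m:ℝ)+1)) *
          Real.arctan (Real.sqrt ((N:ℝ)+1)/Real.sqrt ((m:ℝ)+1)))
        - ∑ m ∈ range N, (2/((m:ℝ)+1)) * Real.arctan (1/Real.sqrt ((m:ℝ)+1)) := by
          linarith
    _ ≤ _ := key2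


set_option linter.unusedTactic false in
set_option linter.unnecessarySeqFocus false in
/-- Sharpness of the constant π in Hilbert's inequality. Here `x n`
denotes x_{n+1}, so the sums run over the positive integers. -/
theorem hilbert_inequality_pi_sharp :
    ∀ C : ℝ, C < Real.pi →
      ∃ x : ℕ → ℝ, (∀ n, 0 ≤ x n) ∧ (Summable fun n => x n ^ 2) ∧
        C * ∑' n : ℕ, x n ^ 2 <
          ∑' m : ℕ, ∑' n : ℕ, x m * x n / ((m : ℝ) + 1 + ((n : ℝ) + 1)) := by
  intro C hC
  classical
  have hC'0 : 0 ≤ max C 0 := le_max_right _ _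
  have hC'π : max C 0 < Real.pi := max_lt hC Real.pi_pos
  obtain ⟨N, hN⟩ := main_pos (max C 0) hC'0 hC'π
  refine ⟨fun n => if n < N then 1/Real.sqrt ((n:ℝ)+1) else 0, ?_, ?_, ?_⟩
  · intro n
    dsimp only
    split <;> positivity
  · apply summable_of_ne_finset_zero (s := range N)
    intro b hb
    rw [Finset.mem_range] at hb
    simp [if_neg hb]
  · have hxz : ∀ b : ℕ, ¬ b < N →
        (if b < N then 1/Real.sqrt ((b:ℝ)+1) else 0) = 0 := fun b hb => if_neg hb
    have h1 : (∑' n : ℕ, (if n < N then 1/Real.sqrt ((n:ℝ)+1) else 0) ^ 2)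
        = ∑ n ∈ range N, (1:ℝ)/((n:ℝ)+1) := by
      rw [tsum_eq_sum (s := range N)
        (fun b hb => by rw [hxz b (by simpa using hb)]; ring)]
      refine Finset.sum_congr rfl fun n hn => ?_
      rw [if_pos (Finset.mem_range.mp hn), div_pow, one_pow,
        Real.sq_sqrt (by positivity)]
    have h2 : (∑' m : ℕ, ∑' n : ℕ,
          (if m < N then 1/Real.sqrt ((m:ℝ)+1) else 0) *
            (if n < N then 1/Real.sqrt ((n:ℝ)+1) else 0) / ((m:ℝ)+1+((n:ℝ)+1)))
        = ∑ m ∈ range N, ∑ n ∈ range N,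
            (1/Real.sqrt ((m:ℝ)+1)) * (1/Real.sqrt ((n:ℝ)+1)) / ((m:ℝ)+1+((n:ℝ)+1)) := by
      rw [tsum_eq_sum (s := range N)
        (fun b hb => by rw [hxz b (by simpa using hb)]; simp)]
      refine Finset.sum_congr rfl fun m hm => ?_
      rw [tsum_eq_sum (s := range N)
        (fun b hb => by rw [hxz b (by simpa using hb)]; simp)]
      refine Finset.sum_congr rfl fun n hn => ?_
      rw [if_pos (Finset.mem_range.mp hm), if_pos (Finset.mem_range.mp hn)]
    rw [h1, h2]
    have hT : (0:ℝ) ≤ ∑ n ∈ range N, (1:ℝ)/((n:ℝ)+1) := by positivity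
    calc C * ∑ n ∈ range N, (1:ℝ)/((n:ℝ)+1)
        ≤ (max C 0) * ∑ n ∈ range N, (1:ℝ)/((n:ℝ)+1) :=
          mul_le_mul_of_nonneg_right (le_max_left _ _) hT
      _ < _ := hN
end

section
/- If a decreasing sequence of positive reals (x_n)_{n≥1} is square-summable, then the double series ∑_{m=1}^∞ ∑_{n=1}^∞ x_m x_n/(m+n) converges. -/
open Finset


private lemma sqrt_succ_pos (n : ℕ) : 0 < Real.sqrt ((n:ℝ) + 1) :=
  Real.sqrt_pos.2 (by positivity)

private lemma sq_sqrt_succ (n : ℕ) : Real.sqrt ((n:ℝ) + 1) ^ 2 = (n:ℝ) + 1 :=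
  Real.sq_sqrt (by positivity)

private lemma telA (n : ℕ) :
    1 / Real.sqrt ((n:ℝ) + 1) ≤ 2 * Real.sqrt ((n:ℝ) + 1) - 2 * Real.sqrt (n:ℝ) := by
  have hb := sqrt_succ_pos n
  have ha : Real.sqrt (n:ℝ) ^ 2 = (n:ℝ) := Real.sq_sqrt n.cast_nonneg
  have hb2 := sq_sqrt_succ n
  rw [div_le_iff₀ hb]
  nlinarith [sq_nonneg (Real.sqrt ((n:ℝ)+1) - Real.sqrt (n:ℝ)), Real.sqrt_nonneg (n:ℝ)]

private lemma telB (n : ℕ) (h1 : 1 ≤ n) :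
    1 / Real.sqrt ((n:ℝ) + 1) ^ 3 ≤ 2 / Real.sqrt (n:ℝ) - 2 / Real.sqrt ((n:ℝ) + 1) := by
  have h1' : (1:ℝ) ≤ (n:ℝ) := by exact_mod_cast h1
  have ha : 0 < Real.sqrt (n:ℝ) := Real.sqrt_pos.2 (by linarith)
  have hb := sqrt_succ_pos n
  have ha2 : Real.sqrt (n:ℝ) ^ 2 = (n:ℝ) := Real.sq_sqrt n.cast_nonneg
  have hb2 := sq_sqrt_succ n
  have hab : Real.sqrt (n:ℝ) ≤ Real.sqrt ((n:ℝ)+1) := Real.sqrt_le_sqrt (by linarith)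
  rw [div_sub_div _ _ ha.ne' hb.ne', div_le_div_iff₀ (by positivity) (by positivity)]
  nlinarith [mul_pos ha hb, sq_nonneg (Real.sqrt ((n:ℝ)+1) - Real.sqrt (n:ℝ)),
    mul_pos (mul_pos ha hb) hb, mul_pos (mul_pos hb hb) hb]

private lemma sum_inv_sqrt_le (m : ℕ) :
    ∑ n ∈ range (m+1), 1 / Real.sqrt ((n:ℝ)+1) ≤ 2 * Real.sqrt ((m:ℝ)+1) := by
  have : ∑ n ∈ range (m+1), (2 * Real.sqrt (((n:ℕ)+1 : ℕ):ℝ) - 2 * Real.sqrt ((n:ℕ):ℝ))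
      = 2 * Real.sqrt (((m+1 : ℕ)):ℝ) - 2 * Real.sqrt ((0:ℕ):ℝ) :=
    Finset.sum_range_sub (fun k => 2 * Real.sqrt (k:ℝ)) (m+1)
  calc ∑ n ∈ range (m+1), 1 / Real.sqrt ((n:ℝ)+1)
      ≤ ∑ n ∈ range (m+1), (2 * Real.sqrt ((n:ℝ)+1) - 2 * Real.sqrt (n:ℝ)) :=
        Finset.sum_le_sum fun n _ => telA n
    _ = 2 * Real.sqrt (((m+1:ℕ)):ℝ) - 2 * Real.sqrt ((0:ℕ):ℝ) := by
        rw [← this]; apply Finset.sum_congr rfl; intro n _; push_cast; ring_nf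
    _ ≤ 2 * Real.sqrt ((m:ℝ)+1) := by
        push_cast; simp [Real.sqrt_zero]

private lemma sum_kernel_le (m N : ℕ) :
    ∑ n ∈ range N, Real.sqrt ((m:ℝ)+1) / (Real.sqrt ((n:ℝ)+1) * ((m:ℝ) + n + 2)) ≤ 4 := by
  set sm := Real.sqrt ((m:ℝ)+1) with hsm
  have hsmpos : 0 < sm := sqrt_succ_pos m
  have hsm2 : sm ^ 2 = (m:ℝ) + 1 := sq_sqrt_succ m
  set u : ℕ → ℝ := fun n => if n ≤ m then 1 / (Real.sqrt ((n:ℝ)+1) * sm) else 0 with hu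
  set D : ℕ → ℝ := fun k => sm * (2 / Real.sqrt ((max k (m+1) : ℕ):ℝ)) with hD
  -- termwise bound
  have hterm : ∀ n : ℕ, Real.sqrt ((m:ℝ)+1) / (Real.sqrt ((n:ℝ)+1) * ((m:ℝ) + n + 2))
      ≤ u n + (D n - D (n+1)) := by
    intro n
    have hb := sqrt_succ_pos n
    have hb2 := sq_sqrt_succ n
    rcases le_or_gt n m with hnm | hnm
    · -- small n : kernel ≤ u n, and D n - D (n+1) = 0
      have hDeq : D n = D (n+1) := by
        simp only [hD]
        rw [max_eq_right (by omega), max_eq_right (by omega)]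
      rw [← hDeq]
      simp only [hu, if_pos hnm]
      have h1 : Real.sqrt ((n:ℝ)+1) * ((m:ℝ)+1) ≤ Real.sqrt ((n:ℝ)+1) * ((m:ℝ) + n + 2) := by
        have h0 : (0:ℝ) ≤ (n:ℝ) := n.cast_nonneg
        have : (m:ℝ) + 1 ≤ (m:ℝ) + n + 2 := by linarith
        nlinarith
      calc sm / (Real.sqrt ((n:ℝ)+1) * ((m:ℝ) + n + 2))
          ≤ sm / (Real.sqrt ((n:ℝ)+1) * ((m:ℝ)+1)) :=
            div_le_div_of_nonneg_left hsmpos.le (by positivity) h1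
        _ = 1 / (Real.sqrt ((n:ℝ)+1) * sm) + 0 := by
            rw [← hsm2]; field_simp; ring
        _ ≤ 1 / (Real.sqrt ((n:ℝ)+1) * sm) + (D n - D n) := by simp
    · -- large n
      have hmn : m + 1 ≤ n := hnm
      have hDn : D n = sm * (2 / Real.sqrt (n:ℝ)) := by
        simp only [hD]; rw [max_eq_left (by omega)]
      have hDn1 : D (n+1) = sm * (2 / Real.sqrt ((n:ℝ)+1)) := by
        simp only [hD]; rw [max_eq_left (by omega)]; push_cast; ring_nf
      have hun : u n = 0 := by simp [hu, Nat.not_le.2 hnm]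
      rw [hun, hDn, hDn1, zero_add, ← mul_sub]
      have htB := telB n (by omega)
      have h1 : Real.sqrt ((n:ℝ)+1) * ((n:ℝ)+1) ≤ Real.sqrt ((n:ℝ)+1) * ((m:ℝ) + n + 2) := by
        have h0 : (0:ℝ) ≤ (m:ℝ) := m.cast_nonneg
        have : (n:ℝ) + 1 ≤ (m:ℝ) + n + 2 := by linarith
        nlinarith
      calc sm / (Real.sqrt ((n:ℝ)+1) * ((m:ℝ) + n + 2))
          ≤ sm / (Real.sqrt ((n:ℝ)+1) * ((n:ℝ)+1)) :=
            div_le_div_of_nonneg_left hsmpos.le (by positivity) h1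
        _ = sm * (1 / Real.sqrt ((n:ℝ)+1) ^ 3) := by
            rw [show Real.sqrt ((n:ℝ)+1) * ((n:ℝ)+1) = Real.sqrt ((n:ℝ)+1)^3 from by
              linear_combination (-Real.sqrt ((n:ℝ)+1)) * hb2, div_eq_mul_one_div]
        _ ≤ sm * (2 / Real.sqrt (n:ℝ) - 2 / Real.sqrt ((n:ℝ)+1)) := by
            apply mul_le_mul_of_nonneg_left htB hsmpos.le
  -- sum the bound
  have hsumu : ∑ n ∈ range N, u n ≤ 2 := by
    have h1 : ∑ n ∈ range N, u n = ∑ n ∈ (range N).filter (· ≤ m), 1 / (Real.sqrt ((n:ℝ)+1) * sm) := by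
      rw [Finset.sum_filter]
    have h2 : ∑ n ∈ (range N).filter (· ≤ m), 1 / (Real.sqrt ((n:ℝ)+1) * sm)
        ≤ ∑ n ∈ range (m+1), 1 / (Real.sqrt ((n:ℝ)+1) * sm) := by
      apply Finset.sum_le_sum_of_subset_of_nonneg
      · intro n hn; simp only [Finset.mem_filter, Finset.mem_range] at hn ⊢; omega
      · intro n _ _; positivity
    have h3 : ∑ n ∈ range (m+1), 1 / (Real.sqrt ((n:ℝ)+1) * sm)
        = (∑ n ∈ range (m+1), 1 / Real.sqrt ((n:ℝ)+1)) * (1 / sm) := by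
      rw [Finset.sum_mul]; apply Finset.sum_congr rfl; intro n _; field_simp
    have h4 := sum_inv_sqrt_le m
    rw [h1] at *
    calc ∑ n ∈ (range N).filter (· ≤ m), 1 / (Real.sqrt ((n:ℝ)+1) * sm)
        ≤ ∑ n ∈ range (m+1), 1 / (Real.sqrt ((n:ℝ)+1) * sm) := h2
      _ = (∑ n ∈ range (m+1), 1 / Real.sqrt ((n:ℝ)+1)) * (1 / sm) := h3
      _ ≤ (2 * sm) * (1 / sm) := by
          apply mul_le_mul_of_nonneg_right h4 (by positivity)
      _ = 2 := by field_simp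
  have hsumD : ∑ n ∈ range N, (D n - D (n+1)) ≤ 2 := by
    rw [Finset.sum_range_sub' D N]
    have hD0 : D 0 = 2 := by
      simp only [hD]; rw [max_eq_right (by omega)]
      push_cast; rw [show ((m:ℝ)+1) = sm ^ 2 from hsm2.symm, Real.sqrt_sq hsmpos.le]
      field_simp
    have hDN : 0 ≤ D N := by
      simp only [hD]; positivity
    linarith
  calc ∑ n ∈ range N, Real.sqrt ((m:ℝ)+1) / (Real.sqrt ((n:ℝ)+1) * ((m:ℝ) + n + 2))
      ≤ ∑ n ∈ range N, (u n + (D n - D (n+1))) := Finset.sum_le_sum fun n _ => hterm n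
    _ = ∑ n ∈ range N, u n + ∑ n ∈ range N, (D n - D (n+1)) := Finset.sum_add_distrib
    _ ≤ 2 + 2 := add_le_add hsumu hsumD
    _ = 4 := by norm_num

private lemma summable_half (x : ℕ → ℝ) (hsq : Summable fun n => x n ^ 2) :
    Summable (fun p : ℕ × ℕ =>
      x p.1 ^ 2 * (Real.sqrt ((p.1:ℝ)+1) / (Real.sqrt ((p.2:ℝ)+1) * ((p.1:ℝ) + p.2 + 2)))) := by
  have hknn : ∀ m n : ℕ,
      0 ≤ Real.sqrt ((m:ℝ)+1) / (Real.sqrt ((n:ℝ)+1) * ((m:ℝ) + n + 2)) := by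
    intro m n
    have := sqrt_succ_pos m; have := sqrt_succ_pos n
    positivity
  have hnonneg : ∀ p : ℕ × ℕ, 0 ≤ x p.1 ^ 2 *
      (Real.sqrt ((p.1:ℝ)+1) / (Real.sqrt ((p.2:ℝ)+1) * ((p.1:ℝ) + p.2 + 2))) :=
    fun p => mul_nonneg (sq_nonneg _) (hknn p.1 p.2)
  refine (summable_prod_of_nonneg hnonneg).2 ⟨fun m => ?_, ?_⟩
  · dsimp only
    exact Summable.mul_left _
      (summable_of_sum_range_le (fun n => hknn m n) (sum_kernel_le m))
  · dsimp only
    refine Summable.of_nonneg_of_le (fun m => ?_) (fun m => ?_) (hsq.mul_right 4)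
    · exact tsum_nonneg fun n => hnonneg (m, n)
    · rw [tsum_mul_left]
      refine mul_le_mul_of_nonneg_left ?_ (sq_nonneg (x m))
      exact Summable.tsum_le_of_sum_range_le
        (summable_of_sum_range_le (fun n => hknn m n) (sum_kernel_le m)) (sum_kernel_le m)


set_option maxHeartbeats 1000000 in
/-- If a decreasing square-summable sequence of positive reals is given, the
Hilbert double series converges. Here `x n` denotes x_{n+1}. -/
theorem hilbert_series_summable_of_antitone (x : ℕ → ℝ) (hpos : ∀ n, 0 < x n)
    (hdec : Antitone x) (hsq : Summable fun n => x n ^ 2) :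
    Summable (fun p : ℕ × ℕ =>
      x p.1 * x p.2 / ((p.1 : ℝ) + 1 + ((p.2 : ℝ) + 1))) := by
  have h1 := summable_half x hsq
  have h2 : Summable (fun p : ℕ × ℕ =>
      x p.2 ^ 2 * (Real.sqrt ((p.2:ℝ)+1) / (Real.sqrt ((p.1:ℝ)+1) * ((p.2:ℝ) + p.1 + 2)))) :=
    (Equiv.prodComm ℕ ℕ).summable_iff.2 (summable_half x hsq)
  refine Summable.of_nonneg_of_le (fun p => ?_) (fun p => ?_) (((h1.add h2).div_const 2))
  · have := (hpos p.1).le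
    have := (hpos p.2).le
    have hd : (0:ℝ) < (p.1:ℝ) + 1 + ((p.2:ℝ) + 1) := by positivity
    positivity
  · obtain ⟨m, n⟩ := p
    dsimp only
    have ha := sqrt_succ_pos m
    have hb := sqrt_succ_pos n
    have ha2 := sq_sqrt_succ m
    have hb2 := sq_sqrt_succ n
    have hD : (0:ℝ) < (m:ℝ) + 1 + ((n:ℝ) + 1) := by positivity
    have hDeq : (m:ℝ) + n + 2 = (m:ℝ) + 1 + ((n:ℝ) + 1) := by ring
    have hDeq' : (n:ℝ) + m + 2 = (m:ℝ) + 1 + ((n:ℝ) + 1) := by ring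
    set A := Real.sqrt ((m:ℝ)+1) with hA
    set B := Real.sqrt ((n:ℝ)+1) with hB
    rw [hDeq, hDeq', div_le_div_iff₀ hD (by positivity : (0:ℝ) < 2)]
    have ha' := ha.ne'
    have hb' := hb.ne'
    have hD' := hD.ne'
    set D := (m:ℝ) + 1 + ((n:ℝ) + 1) with hDdef
    have expand : (x m ^ 2 * (A / (B * D)) + x n ^ 2 * (B / (A * D))) * D
        = (x m ^ 2 * A ^ 2 + x n ^ 2 * B ^ 2) / (A * B) := by
      field_simp
    rw [expand, le_div_iff₀ (mul_pos ha hb)]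
    nlinarith [sq_nonneg (x m * A - x n * B)]
end

section
/- The entire function f(z) = ∏_{n=1}^∞ (1 - z/n²) satisfies min_{|z|=r} |f(z)| ≤ r^{-1/2}/π for all sufficiently large r > 0. -/
open Filter Topology

/-- A product with a zero factor has product zero. -/
lemma hasProd_zero_of_factor_zero {f : ℕ → ℂ} {i : ℕ} (hi : f i = 0) : HasProd f 0 := by
  have h : ∀ᶠ s : Finset ℕ in atTop, ∏ j ∈ s, f j = 0 := by
    filter_upwards [Filter.eventually_ge_atTop ({i} : Finset ℕ)] with s hs
    exact Finset.prod_eq_zero (hs (Finset.mem_singleton_self i)) hi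
  exact Tendsto.congr' (h.mono fun s hs => hs.symm) tendsto_const_nhds

lemma summable_aux (r : ℝ) : Summable (fun n : ℕ => |r| / ((n : ℝ) + 1) ^ 2) := by
  have h1 : Summable (fun n : ℕ => 1 / ((n : ℝ) + 1) ^ 2) := by
    have := (summable_nat_add_iff (f := fun n : ℕ => 1 / (n : ℝ) ^ 2) 1).mpr
      ((Real.summable_one_div_nat_pow (p := 2)).mpr (by norm_num))
    simpa using this
  simpa [div_eq_mul_inv] using h1.mul_left (|r|)

lemma norm_term (r : ℝ) (n : ℕ) : ‖(r : ℂ) / ((n : ℂ) + 1) ^ 2‖ = |r| / ((n : ℝ) + 1) ^ 2 := by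
  rw [show ((n : ℂ) + 1) = ((n + 1 : ℝ) : ℂ) by push_cast; ring, norm_div, ← Complex.ofReal_pow,
    Complex.norm_real, Complex.norm_real, Real.norm_eq_abs, Real.norm_eq_abs,
    abs_of_pos (by positivity : (0:ℝ) < ((n:ℝ)+1)^2)]

/-- Key: the value of the product at a nonnegative real `r`. -/
lemma norm_tprod_le (r : ℝ) (hr : 1 ≤ r) :
    ‖∏' n : ℕ, (1 - (r : ℂ) / ((n : ℂ) + 1) ^ 2)‖ ≤ 1 / (Real.pi * Real.sqrt r) := by
  set g : ℕ → ℂ := fun n => 1 - (r : ℂ) / ((n : ℂ) + 1) ^ 2 with hg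
  have hr0 : (0 : ℝ) < r := lt_of_lt_of_le one_pos hr
  have hs0 : 0 < Real.sqrt r := Real.sqrt_pos.mpr hr0
  have hrhs : 0 ≤ 1 / (Real.pi * Real.sqrt r) := by positivity
  by_cases hzero : ∃ i : ℕ, g i = 0
  · obtain ⟨i, hi⟩ := hzero
    rw [(hasProd_zero_of_factor_zero hi).tprod_eq]
    simpa using hrhs
  push_neg at hzero
  -- multipliable
  have hlog : Summable (fun n : ℕ => Complex.log (g n)) := by
    apply Summable.of_norm_bounded_eventually_nat
      (g := fun n : ℕ => (3 / 2 : ℝ) * (|r| / ((n : ℝ) + 1) ^ 2)) ((summable_aux r).mul_left _)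
    have htail : ∀ᶠ n : ℕ in atTop, |r| / ((n : ℝ) + 1) ^ 2 ≤ 1 / 2 :=
      (summable_aux r).tendsto_atTop_zero.eventually_le_const (by norm_num)
    filter_upwards [htail] with n hn
    have hrw : g n = 1 + -((r : ℂ) / ((n : ℂ) + 1) ^ 2) := by rw [hg]; ring_nf
    have hnn : ‖-((r : ℂ) / ((n : ℂ) + 1) ^ 2)‖ = |r| / ((n : ℝ) + 1) ^ 2 := by
      rw [norm_neg, norm_term]
    calc ‖Complex.log (g n)‖ = ‖Complex.log (1 + -((r : ℂ) / ((n : ℂ) + 1) ^ 2))‖ := by rw [hrw]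
      _ ≤ 3 / 2 * ‖-((r : ℂ) / ((n : ℂ) + 1) ^ 2)‖ :=
          Complex.norm_log_one_add_half_le_self (by rw [hnn]; exact hn)
      _ = 3 / 2 * (|r| / ((n : ℝ) + 1) ^ 2) := by rw [hnn]
  have hmult : Multipliable g :=
    Complex.multipliable_of_summable_log hlog
  -- identify the limit via Euler's product formula
  set z : ℂ := ((Real.sqrt r : ℝ) : ℂ) with hz
  have hz2 : z ^ 2 = (r : ℂ) := by
    rw [hz, ← Complex.ofReal_pow, Real.sq_sqrt hr0.le]
  have heuler := Complex.tendsto_euler_sin_prod z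
  have hprod : Tendsto (fun n : ℕ => ∏ j ∈ Finset.range n, g j) atTop (𝓝 (∏' n, g n)) :=
    hmult.hasProd.tendsto_prod_nat
  have hmul : Tendsto (fun n : ℕ => (Real.pi : ℂ) * z * ∏ j ∈ Finset.range n, g j) atTop
      (𝓝 ((Real.pi : ℂ) * z * ∏' n, g n)) := hprod.const_mul _
  have heq : (Real.pi : ℂ) * z * ∏' n, g n = Complex.sin ((Real.pi : ℂ) * z) := by
    apply tendsto_nhds_unique hmul
    convert heuler using 2 with n
    congr 1
    exact Finset.prod_congr rfl fun j _ => by rw [hg, hz2]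
  have hpz : (Real.pi : ℂ) * z ≠ 0 := by
    apply mul_ne_zero
    · exact_mod_cast Real.pi_ne_zero
    · rw [hz]; exact_mod_cast hs0.ne'
  have htprod : ∏' n, g n = Complex.sin ((Real.pi : ℂ) * z) / ((Real.pi : ℂ) * z) := by
    rw [eq_div_iff hpz, mul_comm]
    exact heq
  rw [htprod, norm_div]
  have hnorm_pz : ‖(Real.pi : ℂ) * z‖ = Real.pi * Real.sqrt r := by
    rw [norm_mul, hz, Complex.norm_real, Complex.norm_real, Real.norm_eq_abs, Real.norm_eq_abs,
      abs_of_pos Real.pi_pos, abs_of_pos hs0]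
  rw [hnorm_pz, div_le_div_iff₀ (by positivity) (by positivity), one_mul]
  have : Complex.sin ((Real.pi : ℂ) * z) = ((Real.sin (Real.pi * Real.sqrt r) : ℝ) : ℂ) := by
    rw [hz, ← Complex.ofReal_mul, ← Complex.ofReal_sin]
  rw [this, Complex.norm_real, Real.norm_eq_abs]
  calc |Real.sin (Real.pi * Real.sqrt r)| * (Real.pi * Real.sqrt r)
      ≤ 1 * (Real.pi * Real.sqrt r) := by
        gcongr
        exact Real.abs_sin_le_one _
    _ = Real.pi * Real.sqrt r := one_mul _

/-- The minimum modulus of `f` on the circle of radius `r`. -/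
noncomputable def minMod (f : ℂ → ℂ) (r : ℝ) : ℝ :=
  sInf ((fun z => ‖f z‖) '' Metric.sphere (0 : ℂ) r)

/-- The entire function ∏ (1 - z/n²) has minimum modulus at most r^(-1/2)/π
for all sufficiently large r. -/
theorem prod_one_sub_div_sq_min_modulus (f : ℂ → ℂ)
    (hf : ∀ z : ℂ, f z = ∏' n : ℕ, (1 - z / ((n : ℂ) + 1) ^ 2)) :
    ∃ R : ℝ, ∀ r : ℝ, R ≤ r → minMod f r ≤ r ^ (-(1 / 2) : ℝ) / Real.pi := by
  refine ⟨1, fun r hr => ?_⟩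
  have hr0 : (0 : ℝ) < r := lt_of_lt_of_le one_pos hr
  have hmem : ((r : ℂ)) ∈ Metric.sphere (0 : ℂ) r := by
    rw [mem_sphere_iff_norm, sub_zero, Complex.norm_real, Real.norm_eq_abs, abs_of_pos hr0]
  have hbdd : BddBelow ((fun z => ‖f z‖) '' Metric.sphere (0 : ℂ) r) := by
    refine ⟨0, fun y hy => ?_⟩
    obtain ⟨w, _, rfl⟩ := hy
    exact norm_nonneg _
  have h1 : minMod f r ≤ ‖f (r : ℂ)‖ := csInf_le hbdd ⟨(r : ℂ), hmem, rfl⟩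
  have h2 : ‖f (r : ℂ)‖ ≤ 1 / (Real.pi * Real.sqrt r) := by
    rw [hf]; exact norm_tprod_le r hr
  refine h1.trans (h2.trans (le_of_eq ?_))
  rw [Real.rpow_neg hr0.le, ← Real.sqrt_eq_rpow]
  field_simp
end

section
/- There exists a function R : ℂ → ℝ_{>0} such that for every n ≥ 1 and all complex numbers a_0, a_2, ..., a_n, the polynomial p(z) = a_0 + z + a_2 z² + ⋯ + a_n z^n assumes at least one of the values 0 or 1 at some point z with |z| ≤ R(a_0). -/
open Metric Complex Filter Set

private lemma exists_primitive {f : ℂ → ℂ} {R : ℝ} (hf : DifferentiableOn ℂ f (ball 0 R)) :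
    ∃ g : ℂ → ℂ, ∀ z ∈ ball (0:ℂ) R, HasDerivAt g (f z) z := by
  set c : ℕ → ℂ := fun n => (n.factorial : ℂ)⁻¹ * iteratedDeriv n f 0 with hc
  have key : ∀ z ∈ ball (0:ℂ) R, HasSum (fun n => c n * z ^ n) (f z) := by
    intro z hz
    have := Complex.hasSum_taylorSeries_on_ball hf hz
    simpa [hc, smul_eq_mul, sub_zero, mul_comm, mul_left_comm] using this
  refine ⟨fun z => ∑' (n : ℕ), ((n:ℂ) + 1)⁻¹ * c n * z ^ (n + 1), ?_⟩
  intro z hz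
  have hzR : ‖z‖ < R := by simpa using hz
  have hR : 0 < R := lt_of_le_of_lt (norm_nonneg z) hzR
  obtain ⟨ρ, t, hzρ, hρt, htR, hρ0, ht0⟩ :
      ∃ ρ t : ℝ, ‖z‖ < ρ ∧ ρ < t ∧ t < R ∧ 0 < ρ ∧ 0 < t := by
    refine ⟨(2 * ‖z‖ + R) / 3, (‖z‖ + 2 * R) / 3, by linarith, by linarith, by linarith, ?_, ?_⟩
    · have := norm_nonneg z; linarith
    · have := norm_nonneg z; linarith
  have htmem : (t : ℂ) ∈ ball (0:ℂ) R := by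
    simp [Complex.norm_real, abs_of_pos ht0, htR]
  have hsum_t := key _ htmem
  have htend : Tendsto (fun n => ‖c n * (t:ℂ) ^ n‖) atTop (nhds 0) := by
    simpa using (hsum_t.summable.tendsto_atTop_zero.norm)
  obtain ⟨C, hC⟩ := htend.bddAbove_range
  have hCb : ∀ n, ‖c n‖ * t ^ n ≤ C := by
    intro n
    have := hC (Set.mem_range_self n)
    simpa [norm_mul, norm_pow, Complex.norm_real, abs_of_pos ht0] using this
  have hu_sum : Summable (fun n => C * (ρ / t) ^ n) :=
    (summable_geometric_of_lt_one (le_of_lt (div_pos hρ0 ht0)) ((div_lt_one ht0).2 hρt)).mul_left C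
  have hderiv : ∀ (n : ℕ), ∀ y ∈ ball (0:ℂ) ρ,
      HasDerivAt (fun w => ((n:ℂ) + 1)⁻¹ * c n * w ^ (n + 1)) (c n * y ^ n) y := by
    intro n y _
    have h1 : HasDerivAt (fun w : ℂ => w ^ (n + 1)) ((((n:ℕ) + 1 : ℕ) : ℂ) * y ^ n) y := by
      simpa using hasDerivAt_pow (n + 1) y
    have h2 := h1.const_mul (((n:ℂ) + 1)⁻¹ * c n)
    have hne : ((n:ℂ) + 1) ≠ 0 := Nat.cast_add_one_ne_zero n
    have h3 : ((n:ℂ) + 1)⁻¹ * c n * ((((n:ℕ) + 1 : ℕ) : ℂ) * y ^ n) = c n * y ^ n := by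
      push_cast
      field_simp
    rwa [h3] at h2
  have hbound : ∀ (n : ℕ), ∀ y ∈ ball (0:ℂ) ρ, ‖c n * y ^ n‖ ≤ C * (ρ / t) ^ n := by
    intro n y hy
    have hyρ : ‖y‖ ≤ ρ := le_of_lt (by simpa using hy)
    have h1 : ‖c n * y ^ n‖ ≤ ‖c n‖ * ρ ^ n := by
      rw [norm_mul, norm_pow]
      exact mul_le_mul_of_nonneg_left (pow_le_pow_left₀ (norm_nonneg y) hyρ n) (norm_nonneg _)
    have h2 : ρ ^ n = (ρ / t) ^ n * t ^ n := by
      rw [div_pow, div_mul_cancel₀]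
      exact pow_ne_zero n ht0.ne'
    have h3 : ‖c n‖ * ρ ^ n ≤ C * (ρ / t) ^ n := by
      calc ‖c n‖ * ρ ^ n = ‖c n‖ * t ^ n * (ρ / t) ^ n := by rw [h2]; ring
        _ ≤ C * (ρ / t) ^ n := mul_le_mul_of_nonneg_right (hCb n) (by positivity)
    exact h1.trans h3
  have h0mem : (0:ℂ) ∈ ball (0:ℂ) ρ := by simpa using hρ0
  have hzmem : z ∈ ball (0:ℂ) ρ := by simpa using hzρ
  have hsum0 : Summable fun n : ℕ => ((n:ℂ) + 1)⁻¹ * c n * (0:ℂ) ^ (n + 1) := by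
    simp only [zero_pow (Nat.succ_ne_zero _), mul_zero]
    exact summable_zero
  have := hasDerivAt_tsum_of_isPreconnected hu_sum isOpen_ball
    (convex_ball (0:ℂ) ρ).isPreconnected hderiv hbound h0mem hsum0 hzmem
  rwa [(key z hz).tsum_eq] at this

private lemma exists_exp_eq {f : ℂ → ℂ} {R : ℝ} (hf : DifferentiableOn ℂ f (ball 0 R))
    (hne : ∀ z ∈ ball (0:ℂ) R, f z ≠ 0) {w₀ : ℂ} (hw₀ : Complex.exp w₀ = f 0)
    (hR : 0 < R) :
    ∃ g : ℂ → ℂ, g 0 = w₀ ∧ (∀ z ∈ ball (0:ℂ) R, Complex.exp (g z) = f z) ∧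
      ∀ z ∈ ball (0:ℂ) R, HasDerivAt g (deriv f z / f z) z := by
  have hOpen : IsOpen (ball (0:ℂ) R) := isOpen_ball
  have hA : AnalyticOnNhd ℂ f (ball 0 R) := hf.analyticOnNhd hOpen
  have hq : DifferentiableOn ℂ (fun z => deriv f z / f z) (ball 0 R) :=
    (hA.deriv.differentiableOn).div hf hne
  obtain ⟨g₀, hg₀⟩ := exists_primitive hq
  set g : ℂ → ℂ := fun z => g₀ z - g₀ 0 + w₀ with hg
  have h0mem : (0:ℂ) ∈ ball (0:ℂ) R := by simpa using hR
  have hgd : ∀ z ∈ ball (0:ℂ) R, HasDerivAt g (deriv f z / f z) z := by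
    intro z hz
    exact ((hg₀ z hz).sub_const (g₀ 0)).add_const w₀
  have hg0 : g 0 = w₀ := by simp [hg]
  -- f z * exp (-g z) is constant
  have hφd : ∀ z ∈ ball (0:ℂ) R, HasDerivAt (fun w => f w * Complex.exp (-g w)) 0 z := by
    intro z hz
    have hfd : HasDerivAt f (deriv f z) z :=
      ((hf.differentiableAt (hOpen.mem_nhds hz)).hasDerivAt)
    have hed : HasDerivAt (fun w => Complex.exp (-g w))
        (Complex.exp (-g z) * -(deriv f z / f z)) z := ((hgd z hz).neg).cexp
    have := hfd.fun_mul hed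
    have hfz := hne z hz
    have hfd' : f z * (deriv f z / f z) = deriv f z := mul_div_cancel₀ _ hfz
    have h0 : deriv f z * Complex.exp (-g z) + f z * (Complex.exp (-g z) * -(deriv f z / f z)) = 0 := by
      linear_combination (-Complex.exp (-g z)) * hfd'
    rw [h0] at this
    exact this
  have hconst : ∀ z ∈ ball (0:ℂ) R, f z * Complex.exp (-g z) = f 0 * Complex.exp (-g 0) := by
    intro z hz
    have := Convex.norm_image_sub_le_of_norm_hasFDerivWithin_le
      (C := 0) (f' := fun _ => ContinuousLinearMap.smulRight (1 : ℂ →L[ℂ] ℂ) (0:ℂ))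
      (fun x hx => ((hφd x hx).hasFDerivAt).hasFDerivWithinAt)
      (fun x _ => by simp [ContinuousLinearMap.norm_smulRight_apply]) (convex_ball (0:ℂ) R) h0mem hz
    have h0 : ‖f z * Complex.exp (-g z) - f 0 * Complex.exp (-g 0)‖ ≤ 0 := by
      simpa using this
    exact sub_eq_zero.mp (norm_le_zero_iff.mp h0)
  refine ⟨g, hg0, ?_, hgd⟩
  intro z hz
  have h1 : f z * Complex.exp (-g z) = 1 := by
    rw [hconst z hz, hg0, ← hw₀, ← Complex.exp_add]
    simp
  have : Complex.exp (-g z) ≠ 0 := Complex.exp_ne_zero _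
  calc Complex.exp (g z) = Complex.exp (g z) * (f z * Complex.exp (-g z)) := by rw [h1]; ring
    _ = f z * (Complex.exp (g z) * Complex.exp (-g z)) := by ring
    _ = f z := by rw [← Complex.exp_add]; simp

private lemma covering {h : ℂ → ℂ} {a : ℂ} {ρ M : ℝ} (hρ : 0 < ρ) (hM : 0 < M)
    (hd : DifferentiableOn ℂ h (ball a ρ))
    (hbd : ∀ z ∈ ball a ρ, ‖deriv h z‖ ≤ M) :
    ball (h a) (‖deriv h a‖ ^ 2 * ρ / (24 * M)) ⊆ h '' (closedBall a (ρ / 2)) := by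
  set μ := ‖deriv h a‖ with hμ
  rcases eq_or_lt_of_le (norm_nonneg (deriv h a)) with hμ0 | hμ0
  · have : μ ^ 2 * ρ / (24 * M) ≤ 0 := by rw [hμ, ← hμ0]; simp
    rw [Metric.ball_eq_empty.mpr this]
    exact empty_subset _
  have hamem : a ∈ ball a ρ := mem_ball_self hρ
  have hμM : μ ≤ M := hbd a hamem
  -- Schwarz bound for deriv h
  have hd' : DifferentiableOn ℂ (deriv h) (ball a ρ) :=
    ((hd.analyticOnNhd isOpen_ball).deriv).differentiableOn
  have hSch : ∀ z ∈ ball a ρ, ‖deriv h z - deriv h a‖ ≤ 3 * M / ρ * ‖z - a‖ := by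
    intro z hz
    have hmap : MapsTo (deriv h) (ball a ρ) (ball (deriv h a) (3 * M)) := by
      intro w hw
      have h1 : ‖deriv h w - deriv h a‖ ≤ 2 * M := by
        calc ‖deriv h w - deriv h a‖ ≤ ‖deriv h w‖ + ‖deriv h a‖ := norm_sub_le _ _
          _ ≤ M + M := add_le_add (hbd w hw) hμM
          _ = 2 * M := by ring
      have : dist (deriv h w) (deriv h a) < 3 * M := by
        rw [dist_eq_norm]; linarith
      exact mem_ball.mpr this
    have := Complex.dist_le_div_mul_dist_of_mapsTo_ball hd' (hmap.mono_right ball_subset_closedBall) hz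
    simpa [dist_eq_norm] using this
  set r' := μ * ρ / (6 * M) with hr'
  have hr'pos : 0 < r' := by positivity
  have hr'ρ : r' < ρ := by
    rw [hr', div_lt_iff₀ (by positivity)]
    nlinarith
  have hr'half : r' ≤ ρ / 2 := by
    rw [hr', div_le_div_iff₀ (by positivity) (by norm_num)]
    nlinarith
  set s := μ ^ 2 * ρ / (24 * M) with hs
  have hspos : 0 < s := by positivity
  have hsub : closedBall a r' ⊆ ball a ρ := closedBall_subset_ball hr'ρ
  -- Taylor error bound on the closed ball of radius r'
  have hE : ∀ z ∈ closedBall a r',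
      ‖h z - h a - deriv h a * (z - a)‖ ≤ 3 * M / ρ * r' * ‖z - a‖ := by
    intro z hz
    have key := Convex.norm_image_sub_le_of_norm_hasFDerivWithin_le
      (f := fun w => h w - deriv h a * w) (C := 3 * M / ρ * r')
      (f' := fun x => ContinuousLinearMap.smulRight (1 : ℂ →L[ℂ] ℂ) (deriv h x - deriv h a))
      (s := closedBall a r') ?_ ?_ (convex_closedBall a r') (mem_closedBall_self hr'pos.le) hz
    · calc ‖h z - h a - deriv h a * (z - a)‖
          = ‖(h z - deriv h a * z) - (h a - deriv h a * a)‖ := by congr 1; ring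
        _ ≤ 3 * M / ρ * r' * ‖z - a‖ := key
    · intro x hx
      have hx' : x ∈ ball a ρ := hsub hx
      have h1 : HasDerivAt h (deriv h x) x :=
        (hd.differentiableAt (isOpen_ball.mem_nhds hx')).hasDerivAt
      have h2 : HasDerivAt (fun w => h w - deriv h a * w) (deriv h x - deriv h a) x := by
        have h2' := (hasDerivAt_id x).const_mul (deriv h a)
        rw [mul_one] at h2'
        exact h1.sub h2'
      exact (hasDerivAt_iff_hasFDerivAt.mp h2).hasFDerivWithinAt
    · intro x hx
      rw [ContinuousLinearMap.norm_smulRight_apply, norm_one, one_mul]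
      have hxa : ‖x - a‖ ≤ r' := by
        rw [← dist_eq_norm]; exact mem_closedBall.mp hx
      calc ‖deriv h x - deriv h a‖ ≤ 3 * M / ρ * ‖x - a‖ := hSch x (hsub hx)
        _ ≤ 3 * M / ρ * r' := by
            exact mul_le_mul_of_nonneg_left hxa (by positivity)
  -- key numeric identity : μ * r' - (3M/ρ * r') * r' = 2 s
  have hnum : μ * r' - 3 * M / ρ * r' * r' = 2 * s := by
    rw [hr', hs]
    field_simp
    ring
  -- main claim
  intro w hw
  have hwd : ‖h a - w‖ < s := by
    rw [← dist_eq_norm, dist_comm]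
    exact mem_ball.mp hw
  by_contra hcon
  have hnv : ∀ z ∈ closedBall a r', h z - w ≠ 0 := by
    intro z hz hzero
    exact hcon ⟨z, (closedBall_subset_closedBall hr'half) hz, by
      have := sub_eq_zero.mp hzero; exact this⟩
  -- minimum modulus principle
  set φ : ℂ → ℂ := fun z => (h z - w)⁻¹ with hφ
  have hφd : DifferentiableOn ℂ φ (closure (ball a r')) := by
    rw [closure_ball a hr'pos.ne']
    exact ((hd.mono hsub).sub (differentiableOn_const w)).inv hnv
  have hφcl : DiffContOnCl ℂ φ (ball a r') := hφd.diffContOnCl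
  have hfront : ∀ z ∈ frontier (ball a r'), ‖φ z‖ ≤ s⁻¹ := by
    intro z hz
    rw [frontier_ball a hr'pos.ne'] at hz
    have hza : ‖z - a‖ = r' := by
      rw [← dist_eq_norm]; exact mem_sphere.mp hz
    have hzcb : z ∈ closedBall a r' := by
      rw [mem_closedBall, dist_eq_norm, hza]
    have hlow : s ≤ ‖h z - w‖ := by
      have h1 : ‖deriv h a * (z - a)‖ = μ * r' := by
        rw [norm_mul, hza, ← hμ]
      have h2 := hE z hzcb
      have h3 : ‖h z - h a‖ ≥ μ * r' - 3 * M / ρ * r' * r' := by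
        have := norm_sub_norm_le (deriv h a * (z - a)) (deriv h a * (z - a) - (h z - h a))
        have h4 : ‖deriv h a * (z - a) - (h z - h a)‖ ≤ 3 * M / ρ * r' * r' := by
          rw [← norm_neg]
          have : -(deriv h a * (z - a) - (h z - h a)) = h z - h a - deriv h a * (z - a) := by ring
          rw [this]
          calc ‖h z - h a - deriv h a * (z - a)‖ ≤ 3 * M / ρ * r' * ‖z - a‖ := h2
            _ = 3 * M / ρ * r' * r' := by rw [hza]
        have h5 : ‖deriv h a * (z - a) - (deriv h a * (z - a) - (h z - h a))‖ = ‖h z - h a‖ := by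
          congr 1; ring
        rw [h5, h1] at this
        linarith
      have h6 : ‖h z - w‖ ≥ ‖h z - h a‖ - ‖h a - w‖ := by
        have h8 := norm_sub_norm_le (h z - h a) (-(h a - w))
        have h9 : ‖h z - h a - -(h a - w)‖ = ‖h z - w‖ := by congr 1; ring
        rw [h9, norm_neg] at h8
        linarith
      linarith [hnum ▸ h3, hwd.le]
    rw [hφ]
    simp only [norm_inv]
    exact inv_anti₀ hspos hlow
  have hacl : a ∈ closure (ball a r') := by
    rw [closure_ball a hr'pos.ne']
    exact mem_closedBall_self hr'pos.le
  have := Complex.norm_le_of_forall_mem_frontier_norm_le isBounded_ball hφcl hfront hacl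
  rw [hφ] at this
  simp only [norm_inv] at this
  have hpos : 0 < ‖h a - w‖ := norm_pos_iff.mpr (hnv a (mem_closedBall_self hr'pos.le))
  have hga : s ≤ ‖h a - w‖ := by
    by_contra hlt
    push_neg at hlt
    have := inv_strictAnti₀ hpos hlt
    linarith
  linarith

private lemma bloch {h : ℂ → ℂ} {R r : ℝ} (hr : 0 < r) (hrR : r < R)
    (hd : DifferentiableOn ℂ h (ball 0 R)) :
    ∃ w : ℂ, ball w (r * ‖deriv h 0‖ / 96) ⊆ h '' (ball (0:ℂ) R) := by
  rcases eq_or_lt_of_le (norm_nonneg (deriv h 0)) with hz0 | hz0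
  · refine ⟨h 0, ?_⟩
    have : r * ‖deriv h 0‖ / 96 ≤ 0 := by rw [← hz0]; simp
    rw [Metric.ball_eq_empty.mpr this]
    exact empty_subset _
  have hsub : closedBall (0:ℂ) r ⊆ ball (0:ℂ) R := closedBall_subset_ball hrR
  have hcont : ContinuousOn (fun z => (r - ‖z‖) * ‖deriv h z‖) (closedBall (0:ℂ) r) := by
    apply ContinuousOn.mul
    · exact (continuous_const.sub continuous_norm).continuousOn
    · exact (((hd.analyticOnNhd isOpen_ball).deriv.continuousOn).mono hsub).norm
  obtain ⟨z₀, hz₀mem, hz₀max⟩ := (isCompact_closedBall (0:ℂ) r).exists_isMaxOn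
    ⟨0, mem_closedBall_self hr.le⟩ hcont
  set m := (r - ‖z₀‖) * ‖deriv h z₀‖ with hm
  have hm0 : r * ‖deriv h 0‖ ≤ m := by
    have := hz₀max (mem_closedBall_self hr.le)
    simpa [hm] using this
  have hmpos : 0 < m := lt_of_lt_of_le (by positivity) hm0
  have hz₀r : ‖z₀‖ ≤ r := by simpa [dist_eq_norm] using mem_closedBall.mp hz₀mem
  set d := r - ‖z₀‖ with hd'
  have hdpos : 0 < d := by
    by_contra hle
    push_neg at hle
    have : m ≤ 0 := by rw [hm]; exact mul_nonpos_of_nonpos_of_nonneg hle (norm_nonneg _)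
    linarith
  set μ := ‖deriv h z₀‖ with hμ
  have hμval : μ = m / d := by rw [hm, mul_div_cancel_left₀ _ hdpos.ne']
  set M := 2 * m / d with hM
  have hMpos : 0 < M := by positivity
  -- closedBall z₀ (d/2) bound
  have hballsub : ball z₀ (d / 2) ⊆ ball (0:ℂ) R := by
    intro z hz
    have : ‖z - z₀‖ < d / 2 := by simpa [dist_eq_norm] using hz
    have : ‖z‖ < R := by
      calc ‖z‖ ≤ ‖z - z₀‖ + ‖z₀‖ := by
            simpa using norm_add_le (z - z₀) z₀
        _ < d / 2 + ‖z₀‖ := by linarith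
        _ ≤ r := by rw [hd']; linarith
        _ < R := hrR
    simpa using this
  have hbd : ∀ z ∈ ball z₀ (d / 2), ‖deriv h z‖ ≤ M := by
    intro z hz
    have hzz₀ : ‖z - z₀‖ < d / 2 := by simpa [dist_eq_norm] using hz
    have hzr : ‖z‖ ≤ r := by
      calc ‖z‖ ≤ ‖z - z₀‖ + ‖z₀‖ := by simpa using norm_add_le (z - z₀) z₀
        _ ≤ r := by rw [hd'] at hzz₀; linarith
    have hmax := hz₀max (by simpa [dist_eq_norm] using hzr)
    have h1 : (r - ‖z‖) * ‖deriv h z‖ ≤ m := by simpa [hm] using hmax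
    have h2 : d / 2 ≤ r - ‖z‖ := by
      have : ‖z‖ ≤ ‖z - z₀‖ + ‖z₀‖ := by simpa using norm_add_le (z - z₀) z₀
      rw [hd'] at hzz₀ ⊢; linarith
    have h3 : (d / 2) * ‖deriv h z‖ ≤ m :=
      le_trans (mul_le_mul_of_nonneg_right h2 (norm_nonneg _)) h1
    rw [hM, le_div_iff₀ (by positivity)]
    nlinarith [h3]
  have hcov := covering (by positivity : (0:ℝ) < d / 2) hMpos (hd.mono hballsub) hbd
  refine ⟨h z₀, ?_⟩
  have himg : h '' closedBall z₀ (d / 2 / 2) ⊆ h '' ball (0:ℂ) R := by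
    apply image_mono
    intro z hz
    have : ‖z - z₀‖ ≤ d / 2 / 2 := by simpa [dist_eq_norm] using hz
    apply hballsub
    have : ‖z - z₀‖ < d / 2 := by linarith
    simpa [dist_eq_norm] using this
  have hrad : r * ‖deriv h 0‖ / 96 ≤ μ ^ 2 * (d / 2) / (24 * M) := by
    have : μ ^ 2 * (d / 2) / (24 * M) = m / 96 := by
      rw [hμval, hM]
      field_simp
      ring
    rw [this]
    linarith
  exact (ball_subset_ball hrad).trans (hcov.trans himg)

private lemma cosh_one_ge : (3:ℝ)/2 ≤ Real.cosh 1 := by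
  rw [Real.cosh_eq]
  have h1 : (2.7182818283 : ℝ) < Real.exp 1 := by
    have := Real.exp_one_gt_d9
    norm_num at this ⊢
    linarith
  have h2 : Real.exp (-1) = (Real.exp 1)⁻¹ := by
    rw [← Real.exp_neg]
  have h3 : (0.36 : ℝ) ≤ Real.exp (-1) := by
    rw [h2]
    rw [le_inv_comm₀ (by norm_num) (Real.exp_pos 1)]
    have := Real.exp_one_lt_d9
    norm_num at this ⊢
    linarith
  linarith

/-- every point of ℂ is within distance 3 of a point v with cosh v ^ 2 a positive integer -/
private lemma grid (w : ℂ) : ∃ v : ℂ, dist v w ≤ 3 ∧ ∃ m : ℕ, 1 ≤ m ∧ Complex.cosh v ^ 2 = m := by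
  set c := |w.re| with hc
  have hc0 : 0 ≤ c := abs_nonneg _
  set m : ℕ := ⌈(Real.cosh c) ^ 2⌉₊ with hm
  have hcosh1 : 1 ≤ Real.cosh c := Real.one_le_cosh c
  have hcoshsq : 1 ≤ (Real.cosh c) ^ 2 := one_le_pow₀ hcosh1
  have hm1 : 1 ≤ m := by
    rw [hm]
    exact_mod_cast Nat.one_le_ceil_iff.mpr (by linarith)
  have hmlb : ((m:ℝ) - 1) < (Real.cosh c) ^ 2 := by
    have h := Nat.ceil_lt_add_one (by positivity : (0:ℝ) ≤ (Real.cosh c) ^ 2)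
    rw [hm]
    linarith
  have hmub : (Real.cosh c) ^ 2 ≤ (m:ℝ) := Nat.le_ceil _
  -- the real number x = arccosh sqrt m
  set x := Real.log (Real.sqrt m + Real.sqrt (m - 1 : ℕ)) with hx
  have hsm1 : 1 ≤ Real.sqrt m := by
    rw [show (1:ℝ) = Real.sqrt 1 by simp]
    exact Real.sqrt_le_sqrt (by exact_mod_cast hm1)
  have hspos : 0 < Real.sqrt m + Real.sqrt (m - 1 : ℕ) := by
    have := Real.sqrt_nonneg ((m:ℕ) - 1 : ℕ)
    linarith
  have hexp : Real.exp x = Real.sqrt m + Real.sqrt (m - 1 : ℕ) := Real.exp_log hspos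
  have hprod : (Real.sqrt m + Real.sqrt (m - 1 : ℕ)) * (Real.sqrt m - Real.sqrt (m - 1 : ℕ)) = 1 := by
    have h1 : Real.sqrt m * Real.sqrt m = (m : ℝ) := Real.mul_self_sqrt (by positivity)
    have h2 : Real.sqrt (m - 1 : ℕ) * Real.sqrt (m - 1 : ℕ) = ((m - 1 : ℕ) : ℝ) :=
      Real.mul_self_sqrt (by positivity)
    have h3 : ((m - 1 : ℕ) : ℝ) = (m : ℝ) - 1 := by
      rw [Nat.cast_sub hm1]; simp
    nlinarith
  have hexpneg : Real.exp (-x) = Real.sqrt m - Real.sqrt (m - 1 : ℕ) := by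
    rw [Real.exp_neg, hexp]
    exact (eq_inv_of_mul_eq_one_left (by rw [mul_comm]; exact hprod)).symm
  have hcoshx : Real.cosh x = Real.sqrt m := by
    rw [Real.cosh_eq, hexp, hexpneg]
    ring
  have hx0 : 0 ≤ x := by
    rw [hx]
    apply Real.log_nonneg
    linarith [Real.sqrt_nonneg (((m : ℕ) - 1 : ℕ) : ℝ)]
  -- c ≤ x
  have hcx : c ≤ x := by
    have h1 : Real.cosh c ≤ Real.cosh x := by
      rw [hcoshx]
      have : Real.cosh c = Real.sqrt ((Real.cosh c)^2) := by
        rw [Real.sqrt_sq (by linarith)]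
      rw [this]
      exact Real.sqrt_le_sqrt hmub
    by_contra hlt
    push_neg at hlt
    have habs : |x| < |c| := by
      rw [_root_.abs_of_nonneg hx0, _root_.abs_of_nonneg hc0]; exact hlt
    have := Real.cosh_lt_cosh.mpr habs
    linarith
  -- x ≤ c + 1
  have hxc : x ≤ c + 1 := by
    have h1 : Real.cosh x < Real.cosh (c + 1) := by
      rw [hcoshx]
      have h2 : Real.cosh (c+1) = Real.cosh c * Real.cosh 1 + Real.sinh c * Real.sinh 1 := by
        rw [Real.cosh_add]
      have h3 : 0 ≤ Real.sinh c := Real.sinh_nonneg_iff.mpr hc0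
      have h4 : 0 ≤ Real.sinh 1 := Real.sinh_nonneg_iff.mpr (by norm_num)
      have h5 : (3:ℝ)/2 * Real.cosh c ≤ Real.cosh (c+1) := by
        rw [h2]
        nlinarith [cosh_one_ge, Real.one_le_cosh c]
      have h6 : Real.sqrt m < (3:ℝ)/2 * Real.cosh c := by
        have h7 : (m : ℝ) < ((3:ℝ)/2 * Real.cosh c)^2 := by
          have : ((3:ℝ)/2 * Real.cosh c)^2 = 9/4 * (Real.cosh c)^2 := by ring
          rw [this]
          nlinarith
        have := Real.sqrt_lt_sqrt (by positivity) h7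
        rwa [Real.sqrt_sq (by positivity)] at this
      linarith
    have h9 := Real.cosh_lt_cosh.mp h1
    rw [_root_.abs_of_nonneg hx0, _root_.abs_of_nonneg (by linarith : (0:ℝ) ≤ c + 1)] at h9
    linarith
  -- imaginary part
  set k := round (w.im / Real.pi) with hk
  have hπ : (0:ℝ) < Real.pi := Real.pi_pos
  have hkim : |w.im - k * Real.pi| ≤ Real.pi / 2 := by
    have h1 := abs_sub_round (w.im / Real.pi)
    have h2 : |w.im / Real.pi - k| * Real.pi ≤ 1/2 * Real.pi :=
      mul_le_mul_of_nonneg_right h1 hπ.le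
    have h3 : (w.im / Real.pi - k) * Real.pi = w.im - k * Real.pi := by
      field_simp
    calc |w.im - k * Real.pi| = |w.im / Real.pi - k| * Real.pi := by
          rw [← h3, abs_mul, _root_.abs_of_pos hπ]
      _ ≤ 1/2 * Real.pi := h2
      _ = Real.pi / 2 := by ring
  -- the grid point
  set xr : ℝ := if 0 ≤ w.re then x else -x with hxr
  set v : ℂ := (xr : ℝ) + (k * Real.pi : ℝ) * I with hv
  refine ⟨v, ?_, m, hm1, ?_⟩
  · have hre : (v - w).re = xr - w.re := by simp [hv]
    have him : (v - w).im = k * Real.pi - w.im := by simp [hv]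
    have h1 : |xr - w.re| ≤ 1 := by
      rcases le_or_gt 0 w.re with hwre | hwre
      · rw [hxr, if_pos hwre]
        rw [hc, _root_.abs_of_nonneg hwre] at hcx hxc
        rw [abs_le]; constructor <;> linarith
      · rw [hxr, if_neg (not_le.mpr hwre)]
        rw [hc, _root_.abs_of_neg hwre] at hcx hxc
        rw [abs_le]; constructor <;> linarith
    have h2 : |k * Real.pi - w.im| ≤ Real.pi / 2 := by
      rw [← abs_neg]; rw [show -(k * Real.pi - w.im) = w.im - k * Real.pi by ring]; exact hkim
    rw [dist_eq_norm]
    calc ‖v - w‖ ≤ |(v-w).re| + |(v-w).im| := Complex.norm_le_abs_re_add_abs_im (v - w)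
      _ ≤ 1 + Real.pi / 2 := by rw [hre, him]; exact add_le_add h1 h2
      _ ≤ 3 := by have := Real.pi_le_four; linarith
  · -- cosh v ^ 2 = m
    have hcoshv : Complex.cosh v = Complex.cosh xr * Complex.cos (k * Real.pi : ℝ) := by
      rw [hv, Complex.cosh_add]
      have h1 : Complex.cosh (((k * Real.pi : ℝ) : ℂ) * I) = Complex.cos ((k * Real.pi : ℝ) : ℂ) :=
        Complex.cosh_mul_I _
      have h2 : Complex.sinh (((k * Real.pi : ℝ) : ℂ) * I) = Complex.sin ((k * Real.pi : ℝ) : ℂ) * I :=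
        Complex.sinh_mul_I _
      have h3 : Complex.sin ((k * Real.pi : ℝ) : ℂ) = 0 := by
        rw [show ((k * Real.pi : ℝ) : ℂ) = (k : ℂ) * Real.pi by push_cast; ring]
        exact Complex.sin_int_mul_pi k
      rw [h1, h2, h3]
      ring
    have hcos2 : Complex.cos ((k * Real.pi : ℝ) : ℂ) ^ 2 = 1 := by
      have := Complex.sin_sq_add_cos_sq ((k * Real.pi : ℝ) : ℂ)
      have h3 : Complex.sin ((k * Real.pi : ℝ) : ℂ) = 0 := by
        rw [show ((k * Real.pi : ℝ) : ℂ) = (k : ℂ) * Real.pi by push_cast; ring]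
        exact Complex.sin_int_mul_pi k
      rw [h3] at this
      simpa using this
    have hcoshxr : Complex.cosh (xr : ℂ) ^ 2 = (m : ℂ) := by
      have h1 : Complex.cosh (xr : ℂ) = (Real.cosh xr : ℂ) := (Complex.ofReal_cosh xr).symm
      have h2 : Real.cosh xr = Real.sqrt m := by
        rcases le_or_gt 0 w.re with hwre | hwre
        · rw [hxr, if_pos hwre]; exact hcoshx
        · rw [hxr, if_neg (not_le.mpr hwre), Real.cosh_neg]; exact hcoshx
      rw [h1, h2]
      rw [← Complex.ofReal_pow]
      norm_cast
      rw [Real.sq_sqrt (by positivity)]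
    calc Complex.cosh v ^ 2 = Complex.cosh (xr:ℂ) ^ 2 * Complex.cos ((k * Real.pi : ℝ) : ℂ) ^ 2 := by
          rw [hcoshv]; ring
      _ = (m : ℂ) := by rw [hcos2, hcoshxr, mul_one]

noncomputable def landauF0 (a₀ : ℂ) : ℂ := Complex.log a₀ / (2 * (Real.pi:ℂ) * I)
noncomputable def landauG1 (a₀ : ℂ) : ℂ := Complex.exp (Complex.log (landauF0 a₀) / 2)
noncomputable def landauG2 (a₀ : ℂ) : ℂ := Complex.exp (Complex.log (landauF0 a₀ - 1) / 2)
noncomputable def landauDelta (a₀ : ℂ) : ℝ :=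
  ‖(2 * (Real.pi:ℂ) * I * a₀)⁻¹ / (2 * landauG1 a₀ * landauG2 a₀)‖

private lemma c2_ne : (2 * (Real.pi:ℂ) * I) ≠ 0 := by
  simp [Real.pi_ne_zero, Complex.I_ne_zero]

private lemma landauF0_ne_one (a₀ : ℂ) : landauF0 a₀ ≠ 1 := by
  intro h
  rw [landauF0, div_eq_one_iff_eq c2_ne] at h
  have := congrArg Complex.im h
  rw [Complex.log_im] at this
  simp at this
  have h2 := Complex.arg_le_pi a₀
  have h3 := Real.pi_pos
  rw [this] at h2
  linarith

private lemma landauDelta_pos {a₀ : ℂ} (h₀ : a₀ ≠ 0) : 0 < landauDelta a₀ := by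
  rw [landauDelta]
  apply norm_pos_iff.mpr
  apply div_ne_zero
  · exact inv_ne_zero (mul_ne_zero c2_ne h₀)
  · exact mul_ne_zero (mul_ne_zero two_ne_zero (Complex.exp_ne_zero _)) (Complex.exp_ne_zero _)

private lemma landau_core {a₀ : ℂ} (h₀ : a₀ ≠ 0) (h₁ : a₀ ≠ 1) {f : ℂ → ℂ} {R : ℝ}
    (hR : 0 < R) (hf : DifferentiableOn ℂ f (ball 0 R)) (hf0 : f 0 = a₀)
    (hf'0 : deriv f 0 = 1)
    (hv0 : ∀ z ∈ ball (0:ℂ) R, f z ≠ 0) (hv1 : ∀ z ∈ ball (0:ℂ) R, f z ≠ 1) :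
    R ≤ 289 / landauDelta a₀ + 1 := by
  set c2 : ℂ := 2 * (Real.pi:ℂ) * I with hc2def
  have hc2 : c2 ≠ 0 := c2_ne
  have h0mem : (0:ℂ) ∈ ball (0:ℂ) R := by simpa using hR
  by_contra hcon
  push_neg at hcon
  set δ := landauDelta a₀ with hδdef
  have hδ : 0 < δ := landauDelta_pos h₀
  -- Step 1 : logarithm of f
  obtain ⟨L, hL0, hLexp, hLd⟩ := exists_exp_eq hf hv0
    (w₀ := Complex.log a₀) (by rw [hf0]; exact Complex.exp_log h₀) hR
  set F : ℂ → ℂ := fun z => L z / c2 with hFdef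
  have hFd : ∀ z ∈ ball (0:ℂ) R, HasDerivAt F (deriv f z / f z / c2) z :=
    fun z hz => (hLd z hz).div_const c2
  have hFdiff : DifferentiableOn ℂ F (ball 0 R) :=
    fun z hz => ((hFd z hz).differentiableAt).differentiableWithinAt
  have hFval : ∀ z ∈ ball (0:ℂ) R, ∀ w : ℂ, F z = w → f z = Complex.exp (w * c2) := by
    intro z hz w hw
    rw [hFdef] at hw
    simp only at hw
    rw [div_eq_iff hc2] at hw
    rw [← hLexp z hz, hw]
  have hF0 : F 0 = landauF0 a₀ := by
    rw [hFdef]; simp only; rw [hL0, landauF0]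
  have hFne0 : ∀ z ∈ ball (0:ℂ) R, F z ≠ 0 := by
    intro z hz h
    exact hv1 z hz (by rw [hFval z hz 0 h]; simp)
  have hFne1 : ∀ z ∈ ball (0:ℂ) R, F z ≠ 1 := by
    intro z hz h
    apply hv1 z hz
    rw [hFval z hz 1 h, one_mul, hc2def]
    exact Complex.exp_two_pi_mul_I
  -- Step 2 : square roots of F and F - 1
  obtain ⟨L₁, hL₁0, hL₁exp, hL₁d⟩ := exists_exp_eq hFdiff hFne0
    (w₀ := Complex.log (F 0)) (Complex.exp_log (hFne0 0 h0mem)) hR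
  set F₂ : ℂ → ℂ := fun z => F z - 1 with hF₂def
  have hF₂d : ∀ z ∈ ball (0:ℂ) R, HasDerivAt F₂ (deriv f z / f z / c2) z :=
    fun z hz => (hFd z hz).sub_const 1
  have hF₂diff : DifferentiableOn ℂ F₂ (ball 0 R) :=
    fun z hz => ((hF₂d z hz).differentiableAt).differentiableWithinAt
  have hF₂ne : ∀ z ∈ ball (0:ℂ) R, F₂ z ≠ 0 := by
    intro z hz
    exact sub_ne_zero.mpr (hFne1 z hz)
  obtain ⟨L₂, hL₂0, hL₂exp, hL₂d⟩ := exists_exp_eq hF₂diff hF₂ne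
    (w₀ := Complex.log (F₂ 0)) (Complex.exp_log (hF₂ne 0 h0mem)) hR
  set G₁ : ℂ → ℂ := fun z => Complex.exp (L₁ z / 2) with hG₁def
  set G₂ : ℂ → ℂ := fun z => Complex.exp (L₂ z / 2) with hG₂def
  have hG₁sq : ∀ z ∈ ball (0:ℂ) R, G₁ z ^ 2 = F z := by
    intro z hz
    rw [hG₁def]
    simp only
    rw [sq, ← Complex.exp_add]
    rw [show L₁ z / 2 + L₁ z / 2 = L₁ z by ring]
    exact hL₁exp z hz
  have hG₂sq : ∀ z ∈ ball (0:ℂ) R, G₂ z ^ 2 = F₂ z := by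
    intro z hz
    rw [hG₂def]
    simp only
    rw [sq, ← Complex.exp_add]
    rw [show L₂ z / 2 + L₂ z / 2 = L₂ z by ring]
    exact hL₂exp z hz
  have hG₁d : ∀ z ∈ ball (0:ℂ) R, HasDerivAt G₁ (G₁ z * (deriv F z / F z / 2)) z := by
    intro z hz
    have := ((hL₁d z hz).div_const 2).cexp
    simpa [hG₁def, div_div] using this
  have hG₂d : ∀ z ∈ ball (0:ℂ) R, HasDerivAt G₂ (G₂ z * (deriv F₂ z / F₂ z / 2)) z := by
    intro z hz
    have := ((hL₂d z hz).div_const 2).cexp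
    simpa [hG₂def, div_div] using this
  -- Step 3 : ψ = G₁ - G₂ and its log H
  set ψ : ℂ → ℂ := fun z => G₁ z - G₂ z with hψdef
  have hψne : ∀ z ∈ ball (0:ℂ) R, ψ z ≠ 0 := by
    intro z hz h
    rw [hψdef] at h
    simp only at h
    have heq : G₁ z = G₂ z := sub_eq_zero.mp h
    have h1 : F z = F₂ z := by rw [← hG₁sq z hz, heq, hG₂sq z hz]
    rw [hF₂def] at h1
    simp only at h1
    exact one_ne_zero (by linear_combination h1 : (1:ℂ) = 0)
  have hψd : ∀ z ∈ ball (0:ℂ) R,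
      HasDerivAt ψ (G₁ z * (deriv F z / F z / 2) - G₂ z * (deriv F₂ z / F₂ z / 2)) z :=
    fun z hz => (hG₁d z hz).sub (hG₂d z hz)
  have hψdiff : DifferentiableOn ℂ ψ (ball 0 R) :=
    fun z hz => ((hψd z hz).differentiableAt).differentiableWithinAt
  obtain ⟨H, hH0, hHexp, hHd⟩ := exists_exp_eq hψdiff hψne
    (w₀ := Complex.log (ψ 0)) (Complex.exp_log (hψne 0 h0mem)) hR
  have hHdiff : DifferentiableOn ℂ H (ball 0 R) :=
    fun z hz => ((hHd z hz).differentiableAt).differentiableWithinAt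
  -- Step 4 : value of deriv H 0
  set g₁ := landauG1 a₀ with hg₁def
  set g₂ := landauG2 a₀ with hg₂def
  have hg₁ : g₁ ≠ 0 := Complex.exp_ne_zero _
  have hg₂ : g₂ ≠ 0 := Complex.exp_ne_zero _
  have hG₁0 : G₁ 0 = g₁ := by rw [hG₁def]; simp only; rw [hL₁0, hF0, hg₁def, landauG1]
  have hG₂0 : G₂ 0 = g₂ := by
    rw [hG₂def]; simp only; rw [hL₂0, hF₂def]
    simp only
    rw [hF0, hg₂def, landauG2]
  have hψ0 : ψ 0 = g₁ - g₂ := by rw [hψdef]; simp only; rw [hG₁0, hG₂0]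
  have hg₁₂ : g₁ - g₂ ≠ 0 := by rw [← hψ0]; exact hψne 0 h0mem
  set e : ℂ := (c2 * a₀)⁻¹ with hedef
  have hdF : deriv F 0 = e := by
    rw [(hFd 0 h0mem).deriv, hf'0, hf0, hedef]
    field_simp
  have hdF₂ : deriv F₂ 0 = e := by
    rw [(hF₂d 0 h0mem).deriv, hf'0, hf0, hedef]
    field_simp
  have hF0g : F 0 = g₁ ^ 2 := by rw [← hG₁0]; exact (hG₁sq 0 h0mem).symm
  have hF₂0g : F₂ 0 = g₂ ^ 2 := by rw [← hG₂0]; exact (hG₂sq 0 h0mem).symm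
  have hderivψ : deriv ψ 0 = g₁ * (e / g₁ ^ 2 / 2) - g₂ * (e / g₂ ^ 2 / 2) := by
    rw [(hψd 0 h0mem).deriv, hdF, hdF₂, hG₁0, hG₂0, hF0g, hF₂0g]
  have hderivH : deriv H 0 = -(e / (2 * g₁ * g₂)) := by
    rw [(hHd 0 h0mem).deriv, hderivψ, hψ0, div_eq_iff hg₁₂]
    field_simp
    ring
  have hnormH : ‖deriv H 0‖ = δ := by
    rw [hderivH, norm_neg, hδdef, landauDelta, hedef, hc2def, hg₁def, hg₂def]
  -- Step 5 : Bloch + grid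
  set r : ℝ := 288 / δ + 1 with hrdef
  have hr0 : 0 < r := by positivity
  have hrR : r < R := by
    have h1 : (288:ℝ) / δ ≤ 289 / δ := by gcongr; norm_num
    calc r = 288 / δ + 1 := hrdef
      _ ≤ 289 / δ + 1 := by linarith
      _ < R := hcon
  obtain ⟨w, hw⟩ := bloch hr0 hrR hHdiff
  obtain ⟨v, hvdist, m, hm1, hvcosh⟩ := grid w
  have hrad : 3 < r * ‖deriv H 0‖ / 96 := by
    rw [hnormH]
    have h2 : r * δ = 288 + δ := by rw [hrdef]; field_simp
    rw [h2, lt_div_iff₀ (by norm_num : (0:ℝ) < 96)]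
    linarith
  have hvmem : v ∈ ball w (r * ‖deriv H 0‖ / 96) := by
    rw [mem_ball]
    calc dist v w ≤ 3 := hvdist
      _ < _ := hrad
  obtain ⟨z, hzB, hHz⟩ := hw hvmem
  -- Step 6 : contradiction
  have hcoshH : Complex.cosh (H z) = G₁ z := by
    rw [Complex.cosh]
    have h1 : Complex.exp (H z) = ψ z := hHexp z hzB
    have h2 : Complex.exp (-H z) = G₁ z + G₂ z := by
      rw [Complex.exp_neg, h1]
      apply inv_eq_of_mul_eq_one_left
      have := hG₁sq z hzB
      have h3 := hG₂sq z hzB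
      rw [hF₂def] at h3
      simp only at h3
      rw [hψdef]
      simp only
      linear_combination this - h3
    rw [h1, h2, hψdef]
    simp only
    ring
  have hFz : F z = (m : ℂ) := by
    rw [← hG₁sq z hzB, ← hcoshH, hHz, hvcosh]
  have : f z = 1 := by
    rw [hFval z hzB (m:ℂ) hFz, Complex.exp_nat_mul, hc2def, Complex.exp_two_pi_mul_I, one_pow]
  exact hv1 z hzB this

/-- Landau's theorem: there is a positive function R of the constant term a₀ alone
such that every polynomial a₀ + z + a₂z² + ⋯ + aₙzⁿ takes the value 0 or 1
somewhere in the disk of radius R(a₀). -/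
theorem landau_polynomial :
    ∃ R : ℂ → ℝ, (∀ a₀ : ℂ, 0 < R a₀) ∧
      ∀ (n : ℕ), 1 ≤ n → ∀ a : ℕ → ℂ, a 1 = 1 →
        ∃ z : ℂ, ‖z‖ ≤ R (a 0) ∧
          ((∑ k ∈ Finset.range (n + 1), a k * z ^ k) = 0 ∨
            (∑ k ∈ Finset.range (n + 1), a k * z ^ k) = 1) := by
  refine ⟨fun a₀ => 289 / landauDelta a₀ + 2, ?_, ?_⟩
  · intro a₀
    have : 0 ≤ landauDelta a₀ := norm_nonneg _
    have h1 : 0 ≤ 289 / landauDelta a₀ := by positivity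
    linarith
  intro n hn a ha1
  set p : ℂ → ℂ := fun z => ∑ k ∈ Finset.range (n + 1), a k * z ^ k with hp
  have hp0 : p 0 = a 0 := by
    rw [hp]
    simp only
    rw [Finset.sum_eq_single 0]
    · simp
    · intro k _ hk
      simp [zero_pow hk]
    · intro h
      exact absurd (Finset.mem_range.mpr (Nat.succ_pos n)) h
  have hpd : ∀ z : ℂ, HasDerivAt p (∑ k ∈ Finset.range (n + 1), a k * (k * z ^ (k - 1))) z := by
    intro z
    apply HasDerivAt.fun_sum
    intro k _
    exact (hasDerivAt_pow k z).const_mul (a k)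
  have hpdiff : Differentiable ℂ p := fun z => (hpd z).differentiableAt
  have hp'0 : deriv p 0 = 1 := by
    rw [(hpd 0).deriv]
    rw [Finset.sum_eq_single 1]
    · simp [ha1]
    · intro k hk hk1
      rcases Nat.eq_zero_or_pos k with h | h
      · simp [h]
      · have : k - 1 ≠ 0 := by omega
        simp [zero_pow this]
    · intro h
      exact absurd (Finset.mem_range.mpr (by omega)) h
  set a₀ := a 0 with ha₀
  rcases eq_or_ne a₀ 0 with h0 | h0
  · refine ⟨0, by
      have h2 : (0:ℝ) ≤ 289 / landauDelta (a 0) := div_nonneg (by norm_num) (norm_nonneg _)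
      simp only [norm_zero]
      linarith, Or.inl ?_⟩
    show p 0 = 0
    rw [hp0, h0]
  rcases eq_or_ne a₀ 1 with h1 | h1
  · refine ⟨0, by
      have h2 : (0:ℝ) ≤ 289 / landauDelta (a 0) := div_nonneg (by norm_num) (norm_nonneg _)
      simp only [norm_zero]
      linarith, Or.inr ?_⟩
    show p 0 = 1
    rw [hp0, h1]
  by_contra hcon
  push_neg at hcon
  set R := 289 / landauDelta a₀ + 2 with hR
  have hRpos : 0 < R := by
    have : 0 ≤ landauDelta a₀ := norm_nonneg _
    have h2 : 0 ≤ 289 / landauDelta a₀ := by positivity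
    rw [hR]; linarith
  have hv : ∀ z ∈ ball (0:ℂ) R, p z ≠ 0 ∧ p z ≠ 1 := by
    intro z hz
    have hzR : ‖z‖ ≤ R := le_of_lt (by simpa using hz)
    obtain ⟨hz0, hz1⟩ := hcon z hzR
    exact ⟨hz0, hz1⟩
  have := landau_core h0 h1 hRpos (hpdiff.differentiableOn) hp0 hp'0
    (fun z hz => (hv z hz).1) (fun z hz => (hv z hz).2)
  rw [hR] at this
  linarith
end
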